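/- arXiv:2204.14080 — 7 statements merged into one kernel-verified Lean document; each statement's English description precedes it below -/
import Mathlib

section
/- Let Γ be an even Artin graph with vertex set V and G its Artin group. For any subset S of V, the map sending each generator s ∈ S to itself and each generator v ∈ V \ S to 1 extends to a well-defined group homomorphism ρ_S : G → G_S which restricts to the identity on the standard parabolic subgroup G_S (i.e., G_S is a retract of G). -/
/-- An Artin graph: a simplicial graph with even/arbitrary labels; `m u v = 0`
means `u` and `v` are not joined by an edge, otherwise `m u v ≥ 2` is the label. -/
structure ArtinGraph (V : Type) where
  m : V → V → ℕ
  symm : ∀ u v, m u v = m v u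
  loopless : ∀ v, m v v = 0
  ne_one : ∀ u v, m u v ≠ 1

namespace ArtinGraph

variable {V : Type}

/-- `word u v n` is the prefix of length `n` of the alternating word `uvuv…`. -/
def word : V → V → ℕ → FreeGroup V
  | _, _, 0 => 1
  | u, v, n + 1 => FreeGroup.of u * word v u n

/-- The Artin relations of the graph. -/
def rels (Γ : ArtinGraph V) : Set (FreeGroup V) :=
  {r | ∃ u v, Γ.m u v ≠ 0 ∧ r = word u v (Γ.m u v) * (word v u (Γ.m u v))⁻¹}

/-- The Artin group of an Artin graph. -/
def ArtinGroup (Γ : ArtinGraph V) : Type := PresentedGroup Γ.rels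

instance (Γ : ArtinGraph V) : Group Γ.ArtinGroup :=
  inferInstanceAs (Group (PresentedGroup Γ.rels))

/-- The generator of the Artin group corresponding to a vertex. -/
def gen (Γ : ArtinGraph V) (v : V) : Γ.ArtinGroup := PresentedGroup.of v

/-- The standard parabolic subgroup on a set `S` of vertices. -/
def std (Γ : ArtinGraph V) (S : Set V) : Subgroup Γ.ArtinGroup :=
  Subgroup.closure (Γ.gen '' S)

/-- The conjugate `g H g⁻¹` of a subgroup. -/
def conjP {G : Type*} [Group G] (g : G) (H : Subgroup G) : Subgroup G :=
  H.map (MulAut.conj g).toMonoidHom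

/-- A parabolic subgroup is a conjugate of a standard parabolic subgroup. -/
def IsParabolic (Γ : ArtinGraph V) (P : Subgroup Γ.ArtinGroup) : Prop :=
  ∃ (S : Set V) (g : Γ.ArtinGroup), P = conjP g (Γ.std S)

/-- An Artin graph is even if all labels are even. -/
def IsEven (Γ : ArtinGraph V) : Prop := ∀ u v, Even (Γ.m u v)

/-- The FC condition for even Artin graphs: in every triangle at least two of
the three labels are equal to `2`. -/
def IsFC (Γ : ArtinGraph V) : Prop :=
  ∀ u v w, Γ.m u v ≠ 0 → Γ.m v w ≠ 0 → Γ.m w u ≠ 0 →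
    (Γ.m u v = 2 ∧ Γ.m v w = 2) ∨ (Γ.m v w = 2 ∧ Γ.m w u = 2) ∨
      (Γ.m u v = 2 ∧ Γ.m w u = 2)

/-- The link of a vertex. -/
def lk (Γ : ArtinGraph V) (x : V) : Set V := {u | Γ.m x u ≠ 0}

/-- The star of a vertex. -/
def star (Γ : ArtinGraph V) (x : V) : Set V := insert x (Γ.lk x)

end ArtinGraph

namespace ArtinGraph

theorem word_two_mul (u v : V) (k : ℕ) :
    word u v (2 * k) = (FreeGroup.of u * FreeGroup.of v) ^ k := by
  induction k generalizing u v with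
  | zero => simp [word]
  | succ k ih =>
    show word u v (2 * k + 1 + 1) = _
    rw [word, word, ih, pow_succ', mul_assoc]

theorem mk_rel_eq_one (Γ : ArtinGraph V) {r : FreeGroup V} (hr : r ∈ Γ.rels) :
    PresentedGroup.mk Γ.rels r = 1 := by
  exact (QuotientGroup.eq_one_iff _).2 (Subgroup.subset_normalClosure hr)

end ArtinGraph

open ArtinGraph in
/-- for an even Artin graph, the standard parabolic `G_S` is a
retract of `G`: the assignment `s ↦ s` (`s ∈ S`), `v ↦ 1` (`v ∉ S`) extends to a
homomorphism `ρ_S : G → G_S` restricting to the identity on `G_S`. -/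
theorem stmt0 {V : Type} (Γ : ArtinGraph V) (hEven : Γ.IsEven) (S : Set V) :
    ∃ ρ : Γ.ArtinGroup →* (Γ.std S),
      (∀ s ∈ S, (ρ (Γ.gen s) : Γ.ArtinGroup) = Γ.gen s) ∧
      (∀ v ∉ S, (ρ (Γ.gen v) : Γ.ArtinGroup) = 1) ∧
      (∀ p : (Γ.std S), ρ (p : Γ.ArtinGroup) = p) := by
  classical
  set f : V → (Γ.std S) := fun v =>
    if h : v ∈ S then ⟨Γ.gen v, Subgroup.subset_closure ⟨v, h, rfl⟩⟩ else 1 with hf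
  have hrels : ∀ r ∈ Γ.rels, FreeGroup.lift f r = 1 := by
    rintro r ⟨u, v, hm, rfl⟩
    obtain ⟨k, hk⟩ := hEven u v
    have h2k : Γ.m u v = 2 * k := by omega
    rw [h2k, word_two_mul, word_two_mul]
    simp only [map_mul, map_inv, map_pow, FreeGroup.lift_apply_of]
    rw [mul_inv_eq_one]
    by_cases hu : u ∈ S <;> by_cases hv : v ∈ S
    · apply Subtype.ext
      simp only [hf, dif_pos hu, dif_pos hv]
      push_cast
      have := Γ.mk_rel_eq_one (r := word u v (Γ.m u v) * (word v u (Γ.m u v))⁻¹)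
        ⟨u, v, hm, rfl⟩
      rw [h2k, word_two_mul, word_two_mul] at this
      simp only [map_mul, map_inv, map_pow, mul_inv_eq_one] at this
      exact this
    · simp [hf, dif_pos hu, dif_neg hv]
    · simp [hf, dif_neg hu, dif_pos hv]
    · simp [hf, dif_neg hu, dif_neg hv]
  have key : ∀ v : V, PresentedGroup.toGroup hrels (Γ.gen v) = f v := fun v =>
    PresentedGroup.toGroup.of hrels
  refine ⟨PresentedGroup.toGroup hrels, ?_, ?_, ?_⟩
  · intro s hs
    exact (congrArg Subtype.val (key s)).trans (by simp [hf, dif_pos hs])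
  · intro v hv
    exact (congrArg Subtype.val (key v)).trans (by simp [hf, dif_neg hv])
  · intro p
    obtain ⟨g, hg⟩ := p
    have : ∀ g, ∀ hg : g ∈ Γ.std S, PresentedGroup.toGroup hrels g = ⟨g, hg⟩ := by
      intro g hg
      induction hg using Subgroup.closure_induction with
      | mem x hx =>
        obtain ⟨s, hs, rfl⟩ := hx
        rw [key s]
        simp [hf, dif_pos hs]
      | one => exact map_one (PresentedGroup.toGroup hrels)
      | mul x y hx hy ihx ihy => rw [show PresentedGroup.toGroup hrels (x * y) = PresentedGroup.toGroup hrels x * PresentedGroup.toGroup hrels y from map_mul _ _ _, ihx, ihy]; rfl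
      | inv x hx ihx => exact (map_inv (PresentedGroup.toGroup hrels) x).trans ((congrArg (fun z => z⁻¹) ihx).trans rfl)
    exact this g hg
end

section
/- Let Γ be an even Artin graph with Artin group G, and let A, B be subsets of the vertex set V. Then the intersection of the standard parabolic subgroups G_A and G_B equals G_{A ∩ B}. -/
open ArtinGraph in
private theorem phi_word {V : Type} {G : Type*} [Group G] (φ : FreeGroup V →* G)
    (u v : V) (k : ℕ) :
    φ (ArtinGraph.word u v (2 * k)) = (φ (FreeGroup.of u) * φ (FreeGroup.of v)) ^ k := by
  induction k generalizing u v with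
  | zero => simp [ArtinGraph.word]
  | succ n ih =>
      have : 2 * (n + 1) = (2 * n) + 1 + 1 := by ring
      rw [this]
      simp only [ArtinGraph.word, map_mul, ih]
      rw [pow_succ']
      group

open ArtinGraph in
private theorem stmt1_aux {V : Type} (Γ : ArtinGraph V) (hEven : Γ.IsEven) (S : Set V) :
    ∃ π : Γ.ArtinGroup →* Γ.ArtinGroup,
      (∀ v ∈ S, π (Γ.gen v) = Γ.gen v) ∧ (∀ v ∉ S, π (Γ.gen v) = 1) := by
  classical
  set f : V → Γ.ArtinGroup := fun v => if v ∈ S then Γ.gen v else 1 with hf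
  have h : ∀ r ∈ Γ.rels, FreeGroup.lift f r = 1 := by
    rintro r ⟨u, v, hm, rfl⟩
    obtain ⟨k, hk⟩ := hEven u v
    have hk2 : Γ.m u v = 2 * k := by omega
    rw [map_mul, map_inv, hk2, phi_word, phi_word]
    have hsymm : Γ.m v u = 2 * k := by rw [Γ.symm]; exact hk2
    simp only [FreeGroup.lift_apply_of, hf]
    by_cases hu : u ∈ S <;> by_cases hv : v ∈ S <;> simp [hu, hv]
    · -- both in S: use the relation
      have : (PresentedGroup.mk Γ.rels) (ArtinGraph.word u v (2 * k)) =
          (PresentedGroup.mk Γ.rels) (ArtinGraph.word v u (2 * k)) := by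
        rw [← hk2]
        have hmem : ArtinGraph.word u v (Γ.m u v) * (ArtinGraph.word v u (Γ.m u v))⁻¹ ∈
            Subgroup.normalClosure Γ.rels :=
          Subgroup.subset_normalClosure ⟨u, v, hm, rfl⟩
        have h1 : (PresentedGroup.mk Γ.rels)
            (ArtinGraph.word u v (Γ.m u v) * (ArtinGraph.word v u (Γ.m u v))⁻¹) = 1 :=
          (QuotientGroup.eq_one_iff _).2 hmem
        rw [map_mul, map_inv] at h1
        exact mul_inv_eq_one.mp h1
      rw [phi_word, phi_word] at this
      exact mul_inv_eq_one.mpr this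
  refine ⟨PresentedGroup.toGroup h, fun v hv => ?_, fun v hv => ?_⟩
  · show PresentedGroup.toGroup h (PresentedGroup.of v) = _
    rw [PresentedGroup.toGroup.of]; simp [hf, hv]
  · show PresentedGroup.toGroup h (PresentedGroup.of v) = _
    rw [PresentedGroup.toGroup.of]; simp [hf, hv]

open ArtinGraph in
/-- in an even Artin group, `G_A ∩ G_B = G_{A ∩ B}`. -/
theorem stmt1 {V : Type} (Γ : ArtinGraph V) (hEven : Γ.IsEven) (A B : Set V) :
    Γ.std A ⊓ Γ.std B = Γ.std (A ∩ B) := by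
  classical
  obtain ⟨π, hπin, hπout⟩ := stmt1_aux Γ hEven A
  apply le_antisymm
  · rintro g ⟨hgA, hgB⟩
    have hfix : π g = g := by
      refine Subgroup.closure_induction (fun x hx => ?_) (map_one π) ?_ ?_ hgA
      · obtain ⟨a, ha, rfl⟩ := hx; exact hπin a ha
      · intro x y _ _ hx hy; rw [map_mul, hx, hy]
      · intro x _ hx; rw [map_inv, hx]
    have hmem : π g ∈ Γ.std (A ∩ B) := by
      refine Subgroup.closure_induction (fun x hx => ?_) (by rw [map_one]; exact one_mem _) ?_ ?_ hgB
      · obtain ⟨b, hb, rfl⟩ := hx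
        by_cases hba : b ∈ A
        · rw [hπin b hba]
          exact Subgroup.subset_closure ⟨b, ⟨hba, hb⟩, rfl⟩
        · rw [hπout b hba]; exact one_mem _
      · intro x y _ _ hx hy; rw [map_mul]; exact mul_mem hx hy
      · intro x _ hx; rw [map_inv]; exact inv_mem hx
    rwa [hfix] at hmem
  · refine le_inf ?_ ?_
    · exact Subgroup.closure_mono (Set.image_mono fun x hx => hx.1)
    · exact Subgroup.closure_mono (Set.image_mono fun x hx => hx.2)
end

section
/- Let Γ be an even Artin graph with Artin group G, A, B ⊆ V, and g, h ∈ G. If the conjugate gG_Ag^{-1} is properly contained in hG_Bh^{-1}, then A is properly contained in B. -/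
namespace Stmt2Aux

open ArtinGraph

variable {V : Type}

lemma word_map {G : Type*} [Group G] (φ : FreeGroup V →* G) (u v : V) :
    ∀ k, φ (word u v (2 * k)) = (φ (FreeGroup.of u) * φ (FreeGroup.of v)) ^ k
  | 0 => by simp [word]
  | k + 1 => by
    have h2 : 2 * (k + 1) = (2 * k + 1) + 1 := by ring
    rw [h2, word, word, map_mul, map_mul, word_map φ u v k, pow_succ', mul_assoc]

/-- If `f` satisfies the braid-type compatibility, all relations are killed. -/
lemma rels_lift {G : Type*} [Group G] (Γ : ArtinGraph V) (hEven : Γ.IsEven) (f : V → G)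
    (hf : ∀ u v k, Γ.m u v ≠ 0 → Γ.m u v = 2 * k → (f u * f v) ^ k = (f v * f u) ^ k) :
    ∀ r ∈ Γ.rels, FreeGroup.lift f r = 1 := by
  rintro r ⟨u, v, hm, rfl⟩
  obtain ⟨k, hk⟩ := hEven u v
  have hk' : Γ.m u v = 2 * k := by omega
  rw [map_mul, map_inv, hk', word_map, word_map]
  simp only [FreeGroup.lift_apply_of]
  rw [hf u v k hm hk', mul_inv_cancel]

lemma mk_mem_rels_eq_one (Γ : ArtinGraph V) {r : FreeGroup V} (hr : r ∈ Γ.rels) :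
    PresentedGroup.mk Γ.rels r = 1 :=
  (QuotientGroup.eq_one_iff _).2 (Subgroup.subset_normalClosure hr)

lemma gen_braid (Γ : ArtinGraph V) {u v : V} {k : ℕ} (hm : Γ.m u v ≠ 0)
    (h : Γ.m u v = 2 * k) : (Γ.gen u * Γ.gen v) ^ k = (Γ.gen v * Γ.gen u) ^ k := by
  have h1 : PresentedGroup.mk Γ.rels (word u v (Γ.m u v) * (word v u (Γ.m u v))⁻¹) = 1 :=
    mk_mem_rels_eq_one Γ ⟨u, v, hm, rfl⟩
  rw [map_mul, map_inv, h, word_map, word_map, mul_inv_eq_one] at h1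
  exact h1

open scoped Classical in
/-- The retraction of the even Artin group onto the standard parabolic `std A`. -/
noncomputable def retr (Γ : ArtinGraph V) (hEven : Γ.IsEven) (A : Set V) :
    Γ.ArtinGroup →* Γ.ArtinGroup :=
  PresentedGroup.toGroup (f := fun v => if v ∈ A then Γ.gen v else 1)
    (rels_lift Γ hEven _ (by
      intro u v k hm hk
      by_cases hu : u ∈ A <;> by_cases hv : v ∈ A <;> simp [hu, hv]
      exact gen_braid Γ hm hk))

open scoped Classical in
lemma retr_gen (Γ : ArtinGraph V) (hEven : Γ.IsEven) (A : Set V) (v : V) :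
    retr Γ hEven A (Γ.gen v) = if v ∈ A then Γ.gen v else 1 :=
  PresentedGroup.toGroup.of _

lemma retr_fix (Γ : ArtinGraph V) (hEven : Γ.IsEven) (A : Set V) {x : Γ.ArtinGroup}
    (hx : x ∈ Γ.std A) : retr Γ hEven A x = x := by
  refine Subgroup.closure_induction (fun y hy => ?_) (map_one _) ?_ ?_ hx
  · obtain ⟨a, ha, rfl⟩ := hy
    rw [retr_gen, if_pos ha]
  · intro a b _ _ ha hb; rw [map_mul, ha, hb]
  · intro a _ ha; rw [map_inv, ha]

lemma retr_mem (Γ : ArtinGraph V) (hEven : Γ.IsEven) (A : Set V) (x : Γ.ArtinGroup) :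
    retr Γ hEven A x ∈ Γ.std A := by
  have : x ∈ Subgroup.comap (retr Γ hEven A) (Γ.std A) := by
    refine PresentedGroup.generated_by Γ.rels _ (fun j => ?_) x
    show retr Γ hEven A (Γ.gen j) ∈ Γ.std A
    rw [retr_gen]
    split
    · exact Subgroup.subset_closure ⟨j, by assumption, rfl⟩
    · exact one_mem _
  exact this

open scoped Classical in
/-- Exponent sum of the generator `a`. -/
noncomputable def expSum (Γ : ArtinGraph V) (hEven : Γ.IsEven) (a : V) :
    Γ.ArtinGroup →* Multiplicative ℤ :=
  PresentedGroup.toGroup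
    (f := fun v => if v = a then Multiplicative.ofAdd (1 : ℤ) else 1)
    (rels_lift Γ hEven _ (by intro u v k _ _; rw [mul_comm]))

open scoped Classical in
lemma expSum_gen (Γ : ArtinGraph V) (hEven : Γ.IsEven) (a v : V) :
    expSum Γ hEven a (Γ.gen v) = if v = a then Multiplicative.ofAdd (1 : ℤ) else 1 :=
  PresentedGroup.toGroup.of _

lemma expSum_std (Γ : ArtinGraph V) (hEven : Γ.IsEven) {a : V} {B : Set V} (ha : a ∉ B)
    {x : Γ.ArtinGroup} (hx : x ∈ Γ.std B) : expSum Γ hEven a x = 1 := by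
  refine Subgroup.closure_induction (fun y hy => ?_) (map_one _) ?_ ?_ hx
  · obtain ⟨b, hb, rfl⟩ := hy
    rw [expSum_gen, if_neg (by rintro rfl; exact ha hb)]
  · intro p q _ _ hp hq; rw [map_mul, hp, hq, mul_one]
  · intro p _ hp; rw [map_inv, hp, inv_one]

lemma mem_conjP {G : Type*} [Group G] {g x : G} {H : Subgroup G} :
    x ∈ conjP g H ↔ g⁻¹ * x * g ∈ H := by
  constructor
  · rintro ⟨y, hy, rfl⟩
    simpa [MulAut.conj_apply, mul_assoc] using hy
  · intro hx
    exact ⟨g⁻¹ * x * g, hx, by simp [MulAut.conj_apply]; group⟩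

lemma conjP_conjP {G : Type*} [Group G] (a b : G) (H : Subgroup G) :
    conjP a (conjP b H) = conjP (a * b) H := by
  ext x
  simp [mem_conjP, mul_assoc]

lemma conjP_le_conjP {G : Type*} [Group G] (c : G) {X Y : Subgroup G} :
    conjP c X ≤ conjP c Y ↔ X ≤ Y := by
  constructor
  · intro hle x hx
    have key : c⁻¹ * (c * x * c⁻¹) * c = x := by group
    have h1 : c * x * c⁻¹ ∈ conjP c X := by rw [mem_conjP, key]; exact hx
    have h2 := hle h1
    rw [mem_conjP, key] at h2
    exact h2
  · intro hle x hx
    obtain ⟨y, hy, rfl⟩ := hx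
    exact ⟨y, hle hy, rfl⟩

end Stmt2Aux

open ArtinGraph in
/-- in an even Artin group, `gG_Ag⁻¹ ⊊ hG_Bh⁻¹` implies `A ⊊ B`. -/
theorem stmt2 {V : Type} (Γ : ArtinGraph V) (hEven : Γ.IsEven) (A B : Set V)
    (g h : Γ.ArtinGroup) (hlt : conjP g (Γ.std A) < conjP h (Γ.std B)) :
    A ⊂ B := by
  open Stmt2Aux in
  -- Step 1: A ⊆ B via exponent-sum homomorphisms.
  have hAB : A ⊆ B := by
    intro a ha
    by_contra haB
    have hgen : Γ.gen a ∈ Γ.std A := Subgroup.subset_closure ⟨a, ha, rfl⟩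
    have hx : g * Γ.gen a * g⁻¹ ∈ conjP g (Γ.std A) := by
      rw [mem_conjP]
      have : g⁻¹ * (g * Γ.gen a * g⁻¹) * g = Γ.gen a := by group
      rw [this]; exact hgen
    have hy : h⁻¹ * (g * Γ.gen a * g⁻¹) * h ∈ Γ.std B := mem_conjP.1 (hlt.le hx)
    have h1 : expSum Γ hEven a (h⁻¹ * (g * Γ.gen a * g⁻¹) * h) = 1 :=
      expSum_std Γ hEven haB hy
    have h2 : expSum Γ hEven a (h⁻¹ * (g * Γ.gen a * g⁻¹) * h)
        = expSum Γ hEven a (Γ.gen a) := by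
      simp only [map_mul, map_inv]
      have := mul_comm (expSum Γ hEven a g) (expSum Γ hEven a (Γ.gen a))
      calc (expSum Γ hEven a h)⁻¹ * (expSum Γ hEven a g * expSum Γ hEven a (Γ.gen a) *
              (expSum Γ hEven a g)⁻¹) * expSum Γ hEven a h
          = (expSum Γ hEven a h)⁻¹ * (expSum Γ hEven a (Γ.gen a) * expSum Γ hEven a g *
              (expSum Γ hEven a g)⁻¹) * expSum Γ hEven a h := by rw [this]
        _ = (expSum Γ hEven a h)⁻¹ * expSum Γ hEven a (Γ.gen a) * expSum Γ hEven a h := by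
              group
        _ = expSum Γ hEven a (Γ.gen a) * (expSum Γ hEven a h)⁻¹ * expSum Γ hEven a h := by
              rw [mul_comm (expSum Γ hEven a h)⁻¹ (expSum Γ hEven a (Γ.gen a))]
        _ = expSum Γ hEven a (Γ.gen a) := by group
    rw [h2, expSum_gen, if_pos rfl] at h1
    have h3 := congrArg Multiplicative.toAdd h1
    simp only [toAdd_ofAdd, toAdd_one] at h3
    exact one_ne_zero h3
  -- Step 2: A ≠ B.
  have hne : A ≠ B := by
    rintro rfl
    set S := Γ.std A with hS
    set k := h⁻¹ * g with hk
    have hconj : conjP h (conjP k S) = conjP g S := by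
      rw [conjP_conjP, hk, mul_inv_cancel_left]
    have hklt : conjP k S < S := by
      have h1 : conjP h (conjP k S) < conjP h S := by rw [hconj]; exact hlt
      have hle : conjP k S ≤ S := (conjP_le_conjP h).1 h1.le
      refine lt_of_le_of_ne hle (fun heq => ?_)
      rw [heq] at h1
      exact lt_irrefl _ h1
    set ρ := retr Γ hEven A with hρ
    have hρk : ρ k ∈ S := retr_mem Γ hEven A k
    -- the key identity
    have hkey : ∀ z ∈ S, k * z * k⁻¹ = ρ k * z * (ρ k)⁻¹ := by
      intro z hz
      have hmem : k * z * k⁻¹ ∈ S := by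
        refine hklt.le (mem_conjP.2 ?_)
        have : k⁻¹ * (k * z * k⁻¹) * k = z := by group
        rw [this]; exact hz
      calc k * z * k⁻¹ = ρ (k * z * k⁻¹) := (retr_fix Γ hEven A hmem).symm
        _ = ρ k * ρ z * (ρ k)⁻¹ := by rw [map_mul, map_mul, map_inv]
        _ = ρ k * z * (ρ k)⁻¹ := by rw [retr_fix Γ hEven A hz]
    -- hence S ≤ conjP k S, contradiction
    have hle : S ≤ conjP k S := by
      intro x hx
      have hz : (ρ k)⁻¹ * x * ρ k ∈ S :=
        S.mul_mem (S.mul_mem (S.inv_mem hρk) hx) hρk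
      refine ⟨(ρ k)⁻¹ * x * ρ k, hz, ?_⟩
      have := hkey _ hz
      show k * ((ρ k)⁻¹ * x * ρ k) * k⁻¹ = x
      rw [this]
      group
    exact hklt.not_ge hle
  exact HasSubset.Subset.ssubset_of_ne hAB hne
end

section
/- Let Γ be an even Artin graph with Artin group G. For any f, g ∈ G and A, B ⊆ V, there exist a ∈ G_A and b ∈ G_B such that fG_Af^{-1} ∩ gG_Bg^{-1} = (fa)G_C(fa)^{-1} ∩ (gb)G_C(gb)^{-1}, where C = A ∩ B. -/
namespace ArtinGraph

variable {V : Type}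

/-- Alternating word in a group. -/
def gw {G : Type*} [Group G] : G → G → ℕ → G
  | _, _, 0 => 1
  | x, y, n + 1 => x * gw y x n

lemma hom_word {G : Type*} [Group G] (φ : FreeGroup V →* G) (u v : V) (n : ℕ) :
    φ (word u v n) = gw (φ (FreeGroup.of u)) (φ (FreeGroup.of v)) n := by
  induction n generalizing u v with
  | zero => simp [word, gw]
  | succ n ih => simp [word, gw, ih u v, ih v u, map_mul]

lemma gw_one {G : Type*} [Group G] (x : G) (k : ℕ) :
    gw x 1 (2 * k) = x ^ k ∧ gw 1 x (2 * k) = x ^ k := by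
  induction k with
  | zero => simp [gw]
  | succ k ih =>
    have h1 : 2 * (k + 1) = (2 * k) + 1 + 1 := by ring
    constructor
    · rw [h1]; show x * (1 * gw x 1 (2 * k)) = _
      rw [ih.1, one_mul, ← pow_succ']
    · rw [h1]; show 1 * (x * gw 1 x (2 * k)) = _
      rw [ih.2, one_mul, ← pow_succ']

lemma gw_even {G : Type*} [Group G] (x : G) {n : ℕ} (hn : Even n) :
    gw x 1 n = gw 1 x n := by
  obtain ⟨k, rfl⟩ := hn
  have : k + k = 2 * k := by ring
  rw [this, (gw_one x k).1, (gw_one x k).2]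

lemma mk_word_eq (Γ : ArtinGraph V) {u v : V} (h : Γ.m u v ≠ 0) :
    PresentedGroup.mk Γ.rels (word u v (Γ.m u v)) =
      PresentedGroup.mk Γ.rels (word v u (Γ.m u v)) := by
  have hmem : word u v (Γ.m u v) * (word v u (Γ.m u v))⁻¹ ∈
      Subgroup.normalClosure Γ.rels :=
    Subgroup.subset_normalClosure ⟨u, v, h, rfl⟩
  have h1 : PresentedGroup.mk Γ.rels (word u v (Γ.m u v) * (word v u (Γ.m u v))⁻¹) = 1 :=
    (QuotientGroup.eq_one_iff _).2 hmem
  rw [map_mul, map_inv, mul_inv_eq_one] at h1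
  exact h1

lemma gen_gw_eq (Γ : ArtinGraph V) {u v : V} (h : Γ.m u v ≠ 0) :
    gw (Γ.gen u) (Γ.gen v) (Γ.m u v) = gw (Γ.gen v) (Γ.gen u) (Γ.m u v) := by
  have h1 := hom_word (PresentedGroup.mk Γ.rels) u v (Γ.m u v)
  have h2 := hom_word (PresentedGroup.mk Γ.rels) v u (Γ.m u v)
  show gw ((PresentedGroup.mk Γ.rels) (FreeGroup.of u)) ((PresentedGroup.mk Γ.rels)
      (FreeGroup.of v)) (Γ.m u v) = gw ((PresentedGroup.mk Γ.rels) (FreeGroup.of v))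
      ((PresentedGroup.mk Γ.rels) (FreeGroup.of u)) (Γ.m u v)
  rw [← h1, ← h2]
  exact Γ.mk_word_eq h

open Classical in
/-- The retraction onto a standard parabolic. -/
noncomputable def ret (Γ : ArtinGraph V) (hEven : Γ.IsEven) (S : Set V) :
    Γ.ArtinGroup →* Γ.ArtinGroup :=
  PresentedGroup.toGroup (f := fun v => if v ∈ S then Γ.gen v else 1) <| by
    rintro r ⟨u, v, hm, rfl⟩
    rw [map_mul, map_inv, hom_word, hom_word, mul_inv_eq_one,
      FreeGroup.lift_apply_of, FreeGroup.lift_apply_of]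
    by_cases hu : u ∈ S <;> by_cases hv : v ∈ S <;> simp only [if_pos, if_neg, hu, hv,
      if_true, if_false]
    · exact Γ.gen_gw_eq hm
    · exact gw_even _ (hEven u v)
    · exact (gw_even _ (hEven u v)).symm

open Classical in
lemma ret_gen (Γ : ArtinGraph V) (hEven : Γ.IsEven) (S : Set V) (v : V) :
    Γ.ret hEven S (Γ.gen v) = if v ∈ S then Γ.gen v else 1 := by
  classical
  exact (PresentedGroup.toGroup.of _).trans (by convert rfl)

lemma ret_fix (Γ : ArtinGraph V) (hEven : Γ.IsEven) (S : Set V) {x : Γ.ArtinGroup}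
    (hx : x ∈ Γ.std S) : Γ.ret hEven S x = x := by
  induction hx using Subgroup.closure_induction with
  | mem z hz =>
    obtain ⟨v, hv, rfl⟩ := hz
    rw [ret_gen, if_pos hv]
  | one => simp
  | mul y z _ _ hy hz => rw [map_mul, hy, hz]
  | inv y _ hy => rw [map_inv, hy]

lemma ret_mem_inter (Γ : ArtinGraph V) (hEven : Γ.IsEven) (S T : Set V) {x : Γ.ArtinGroup}
    (hx : x ∈ Γ.std T) : Γ.ret hEven S x ∈ Γ.std (S ∩ T) := by
  induction hx using Subgroup.closure_induction with
  | mem z hz =>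
    obtain ⟨v, hv, rfl⟩ := hz
    rw [ret_gen]
    by_cases hvS : v ∈ S
    · rw [if_pos hvS]
      exact Subgroup.subset_closure ⟨v, ⟨hvS, hv⟩, rfl⟩
    · rw [if_neg hvS]; exact one_mem _
  | one => rw [map_one]; exact one_mem _
  | mul y z _ _ hy hz => rw [map_mul]; exact mul_mem hy hz
  | inv y _ hy => rw [map_inv]; exact inv_mem hy

lemma ret_mem (Γ : ArtinGraph V) (hEven : Γ.IsEven) (S : Set V) (x : Γ.ArtinGroup) :
    Γ.ret hEven S x ∈ Γ.std S := by
  have hx : x ∈ Subgroup.closure (Set.range (Γ.gen)) := by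
    show x ∈ Subgroup.closure (Set.range (PresentedGroup.of (rels := Γ.rels)))
    rw [PresentedGroup.closure_range_of]; trivial
  induction hx using Subgroup.closure_induction with
  | mem z hz =>
    obtain ⟨v, rfl⟩ := hz
    rw [ret_gen]
    by_cases hvS : v ∈ S
    · rw [if_pos hvS]; exact Subgroup.subset_closure ⟨v, hvS, rfl⟩
    · rw [if_neg hvS]; exact one_mem _
  | one => rw [map_one]; exact one_mem _
  | mul y z _ _ hy hz => rw [map_mul]; exact mul_mem hy hz
  | inv y _ hy => rw [map_inv]; exact inv_mem hy

lemma std_mono (Γ : ArtinGraph V) {S T : Set V} (h : S ⊆ T) : Γ.std S ≤ Γ.std T :=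
  Subgroup.closure_mono (Set.image_mono h)

lemma mem_conjP {G : Type*} [Group G] {g x : G} {H : Subgroup G} :
    x ∈ conjP g H ↔ ∃ y ∈ H, g * y * g⁻¹ = x := by
  simp [conjP, Subgroup.mem_map]

end ArtinGraph

open ArtinGraph in
/-- in an even Artin group, for `f, g ∈ G` and `A, B ⊆ V` there are
`a ∈ G_A`, `b ∈ G_B` with
`fG_Af⁻¹ ∩ gG_Bg⁻¹ = (fa)G_C(fa)⁻¹ ∩ (gb)G_C(gb)⁻¹` where `C = A ∩ B`. -/
theorem stmt3 {V : Type} (Γ : ArtinGraph V) (hEven : Γ.IsEven) (A B : Set V)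
    (f g : Γ.ArtinGroup) :
    ∃ a ∈ Γ.std A, ∃ b ∈ Γ.std B,
      conjP f (Γ.std A) ⊓ conjP g (Γ.std B) =
        conjP (f * a) (Γ.std (A ∩ B)) ⊓ conjP (g * b) (Γ.std (A ∩ B)) := by
    classical
  set C := A ∩ B with hC
  set h := f⁻¹ * g with hh
  refine ⟨Γ.ret hEven A h, Γ.ret_mem hEven A h, Γ.ret hEven B h⁻¹, Γ.ret_mem hEven B h⁻¹, ?_⟩
  set a := Γ.ret hEven A h with ha_def
  set b := Γ.ret hEven B h⁻¹ with hb_def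
  have ha : a ∈ Γ.std A := Γ.ret_mem hEven A h
  have hb : b ∈ Γ.std B := Γ.ret_mem hEven B h⁻¹
  have hbh : Γ.ret hEven B h = b⁻¹ := by
    rw [hb_def, ← map_inv, inv_inv]
  ext x
  simp only [Subgroup.mem_inf, mem_conjP]
  constructor
  · rintro ⟨⟨y, hy, hyx⟩, ⟨z, hz, hzx⟩⟩
    have hy2 : y = f⁻¹ * (f * y * f⁻¹) * f := by group
    rw [hyx, ← hzx] at hy2
    have key : y = h * z * h⁻¹ := by rw [hh, hy2]; group
    have key2 : z = h⁻¹ * y * h := by rw [key]; group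
    have hAz : Γ.ret hEven A z ∈ Γ.std (A ∩ B) := Γ.ret_mem_inter hEven A B hz
    have hBy : Γ.ret hEven B y ∈ Γ.std (A ∩ B) := by
      have := Γ.ret_mem_inter hEven B A hy
      rwa [Set.inter_comm] at this
    have hy' : y = a * Γ.ret hEven A z * a⁻¹ := by
      conv_lhs => rw [← Γ.ret_fix hEven A hy, key]
      rw [map_mul, map_mul, map_inv]
    have hz' : z = b * Γ.ret hEven B y * b⁻¹ := by
      conv_lhs => rw [← Γ.ret_fix hEven B hz, key2]
      rw [map_mul, map_mul, hbh, hb_def]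
    refine ⟨⟨Γ.ret hEven A z, hAz, ?_⟩, ⟨Γ.ret hEven B y, hBy, ?_⟩⟩
    · rw [← hyx, hy']; group
    · rw [← hzx, hz']; group
  · rintro ⟨⟨c, hc, hcx⟩, ⟨d, hd, hdx⟩⟩
    constructor
    · refine ⟨a * c * a⁻¹,
        mul_mem (mul_mem ha (Γ.std_mono Set.inter_subset_left hc)) (inv_mem ha), ?_⟩
      rw [← hcx]; group
    · refine ⟨b * d * b⁻¹,
        mul_mem (mul_mem hb (Γ.std_mono Set.inter_subset_right hd)) (inv_mem hb), ?_⟩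
      rw [← hdx]; group
end

section
/- Let Γ be an even Artin graph with Artin group G, A, B ⊆ V, and f, g ∈ G. If fG_Af^{-1} = gG_Bg^{-1}, then A = B. Consequently, for any parabolic subgroup K of G there is a unique subset S ⊆ V such that K is conjugate to G_S. -/
namespace ArtinGraphAux

open ArtinGraph

variable {V : Type}

/-- Abelianization targets: map each vertex to the corresponding basis element. -/
noncomputable def abf (v : V) : Multiplicative (V →₀ ℤ) := Multiplicative.ofAdd (Finsupp.single v 1)

lemma lift_word_even (k : ℕ) (u v : V) :
    FreeGroup.lift abf (ArtinGraph.word u v (2 * k)) = (abf u * abf v) ^ k := by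
  induction k generalizing u v with
  | zero => simp [ArtinGraph.word]
  | succ k ih =>
      have h2 : 2 * (k + 1) = (2 * k) + 1 + 1 := by ring
      rw [h2]
      show FreeGroup.lift abf
        (FreeGroup.of u * (FreeGroup.of v * ArtinGraph.word u v (2 * k))) = _
      rw [map_mul, map_mul, FreeGroup.lift_apply_of, FreeGroup.lift_apply_of, ih, pow_succ',
        mul_assoc]

lemma map_conjP {G H : Type*} [Group G] [CommGroup H] (φ : G →* H) (g : G)
    (K : Subgroup G) : (conjP g K).map φ = K.map φ := by
  unfold conjP
  rw [Subgroup.map_map]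
  congr 1
  ext x
  simp only [MonoidHom.comp_apply, MulEquiv.coe_toMonoidHom, MulAut.conj_apply,
    map_mul, map_inv]
  rw [mul_comm (φ g) (φ x), mul_assoc, mul_inv_cancel, mul_one]

/-- The subgroup of elements supported on `B`. -/
noncomputable def suppSubgroup (B : Set V) : Subgroup (Multiplicative (V →₀ ℤ)) where
  carrier := {x | ∀ w, w ∉ B → x.toAdd w = 0}
  one_mem' := by intro w _; simp
  mul_mem' := by
    intro a b ha hb w hw
    have : (a * b).toAdd = a.toAdd + b.toAdd := rfl
    rw [this, Finsupp.add_apply, ha w hw, hb w hw, add_zero]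
  inv_mem' := by
    intro a ha w hw
    have : (a⁻¹).toAdd = -a.toAdd := rfl
    rw [this, Finsupp.neg_apply, ha w hw, neg_zero]

lemma key {V : Type} (Γ : ArtinGraph V) (hEven : Γ.IsEven)
    (A B : Set V) (f g : Γ.ArtinGroup)
    (h : conjP f (Γ.std A) = conjP g (Γ.std B)) : A = B := by
  have hrels : ∀ r ∈ Γ.rels, FreeGroup.lift abf r = 1 := by
    rintro r ⟨u, v, hm, rfl⟩
    obtain ⟨k, hk⟩ := hEven u v
    have hk' : Γ.m u v = 2 * k := by omega
    rw [map_mul, map_inv, hk', lift_word_even, lift_word_even,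
      mul_comm (abf v) (abf u), mul_inv_cancel]
  let φ : Γ.ArtinGroup →* Multiplicative (V →₀ ℤ) := PresentedGroup.toGroup hrels
  have hstd : ∀ S : Set V, (Γ.std S).map φ = Subgroup.closure (abf '' S) := by
    intro S
    rw [ArtinGraph.std, MonoidHom.map_closure, Set.image_image]
    congr 1
    ext x
    constructor
    · rintro ⟨v, hv, rfl⟩
      exact ⟨v, hv, (PresentedGroup.toGroup.of hrels).symm ▸ rfl⟩
    · rintro ⟨v, hv, rfl⟩
      refine ⟨v, hv, ?_⟩
      exact PresentedGroup.toGroup.of hrels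
  have hcl : Subgroup.closure (abf '' A) = Subgroup.closure (abf '' B) := by
    rw [← hstd A, ← hstd B, ← map_conjP φ f (Γ.std A), ← map_conjP φ g (Γ.std B), h]
  have main : ∀ (S T : Set V), Subgroup.closure (abf '' S) ≤ Subgroup.closure (abf '' T) →
      S ⊆ T := by
    intro S T hST v hv
    have h1 : abf v ∈ Subgroup.closure (abf '' T) :=
      hST (Subgroup.subset_closure ⟨v, hv, rfl⟩)
    have h2 : Subgroup.closure (abf '' T) ≤ suppSubgroup T := by
      rw [Subgroup.closure_le]
      rintro x ⟨u, hu, rfl⟩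
      intro w hw
      have huw : u ≠ w := fun e => hw (e ▸ hu)
      show (Finsupp.single u (1 : ℤ)) w = 0
      exact Finsupp.single_eq_of_ne' huw
    by_contra hvT
    have := h2 h1 v hvT
    rw [show (abf v).toAdd = Finsupp.single v 1 from rfl, Finsupp.single_eq_same] at this
    exact one_ne_zero this
  exact le_antisymm (main A B hcl.le) (main B A hcl.ge)

end ArtinGraphAux

open ArtinGraph in
/-- in an even Artin group, `fG_Af⁻¹ = gG_Bg⁻¹` implies `A = B`;
consequently every parabolic subgroup is conjugate to `G_S` for a unique `S`. -/
theorem stmt5 {V : Type} (Γ : ArtinGraph V) (hEven : Γ.IsEven) :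
    (∀ (A B : Set V) (f g : Γ.ArtinGroup),
        conjP f (Γ.std A) = conjP g (Γ.std B) → A = B) ∧
    ∀ K : Subgroup Γ.ArtinGroup, Γ.IsParabolic K →
      ∃! S : Set V, ∃ g : Γ.ArtinGroup, K = conjP g (Γ.std S) := by
  refine ⟨ArtinGraphAux.key Γ hEven, ?_⟩
  rintro K ⟨S, g, hK⟩
  exact ⟨S, ⟨g, hK⟩, fun S' ⟨g', hK'⟩ =>
    ArtinGraphAux.key Γ hEven S' S g' g (hK'.symm.trans hK)⟩
end

section
/- Let G be the Artin group on two generators a, x with single relation (ax)^k = (xa)^k (edge label 2k, k ≥ 1). For any g ∈ G, the intersection ⟨a⟩ ∩ g⟨a⟩g^{-1} is either equal to ⟨a⟩ or trivial. -/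
open ArtinGraph in
/-- The dihedral-type even Artin graph on two vertices with label `2k`. -/
def edgeGraph (k : ℕ) : ArtinGraph Bool where
  m u v := if u = v then 0 else 2 * k
  symm u v := by rcases u <;> rcases v <;> rfl
  loopless v := by simp
  ne_one u v := by
    rcases u <;> rcases v <;> simp <;> omega

namespace Stmt9Aux
open FreeGroup List

variable {α : Type} [DecidableEq α]

abbrev NC : (α × Bool) → (α × Bool) → Prop := fun a b => ¬(a.1 = b.1 ∧ a.2 = !b.2)

lemma reduce_eq_self_iff (L : List (α × Bool)) :
    FreeGroup.reduce L = L ↔ List.Chain' NC L := by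
  induction L with
  | nil => simp; exact List.isChain_nil
  | cons x L ih =>
    rw [FreeGroup.reduce.cons]
    rcases r : FreeGroup.reduce L with _ | ⟨hd, tl⟩
    · simp only []
      constructor
      · intro h
        have hL : L = [] := by injection h with h1 h2; exact h2.symm
        subst hL; exact List.isChain_singleton _
      · intro hc
        have hL : L = [] := by
          rw [← ih.mpr (List.isChain_cons.mp hc).2]; exact r
        subst hL; rfl
    · simp only []
      constructor
      · intro h
        split_ifs at h with hcond
        · exfalso
          have h1 : (FreeGroup.reduce L).length ≤ L.length :=
            FreeGroup.Red.length_le (FreeGroup.reduce.red)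
          rw [r] at h1
          have h2 := congrArg List.length h
          simp at h1 h2
          omega
        · injection h with _ h2
          have hL : FreeGroup.reduce L = L := by rw [r, h2]
          refine List.isChain_cons.mpr ⟨?_, ih.mp hL⟩
          intro y hy
          rw [← h2] at hy
          simp at hy
          subst hy
          exact hcond
      · intro hc
        have hL : FreeGroup.reduce L = L := ih.mpr (List.isChain_cons.mp hc).2
        rw [hL] at r
        subst r
        have hnc : NC x hd := (List.isChain_cons.mp hc).1 hd (by simp)
        rw [if_neg hnc]

lemma chain'_toWord (w : FreeGroup α) : List.Chain' NC w.toWord :=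
  (reduce_eq_self_iff _).mp (FreeGroup.reduce_toWord w)

lemma mk_replicate (c : α) (m : ℕ) :
    FreeGroup.mk (List.replicate m (c, true)) = FreeGroup.of c ^ m := by
  rw [← FreeGroup.toWord_of_pow, FreeGroup.mk_toWord]

lemma key (c : α) (m : ℕ) (hm : m ≠ 0) (w : FreeGroup α)
    (h : Commute w (FreeGroup.of c ^ m)) : Commute w (FreeGroup.of c) := by
  suffices H : ∀ n (w : FreeGroup α), w.toWord.length ≤ n →
      Commute w (FreeGroup.of c ^ m) → Commute w (FreeGroup.of c) by
    exact H _ w le_rfl h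
  clear h w
  intro n
  induction n with
  | zero =>
    intro w hw _
    have : w = 1 := FreeGroup.toWord_eq_nil_iff.mp
      (List.eq_nil_of_length_eq_zero (Nat.le_zero.mp hw))
    subst this; exact Commute.one_left _
  | succ n ih =>
    intro w hw h
    rcases List.eq_nil_or_concat w.toWord with hnil | ⟨L', ⟨d, b⟩, hL⟩

    · have : w = 1 := FreeGroup.toWord_eq_nil_iff.mp hnil
      subst this; exact Commute.one_left _
    rw [List.concat_eq_append] at hL
    have cL : List.Chain' NC w.toWord := chain'_toWord w
    have hw' : w = FreeGroup.mk L' * FreeGroup.mk [(d, b)] := by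
      rw [FreeGroup.mul_mk, ← hL, FreeGroup.mk_toWord]
    by_cases hdc : d = c
    · subst hdc
      -- last letter is c^{±1}: strip it
      have hu : Commute (FreeGroup.mk [(d, b)]) (FreeGroup.of d) := by
        cases b
        · have : FreeGroup.mk [(d, false)] = (FreeGroup.of d)⁻¹ := by
            rw [show FreeGroup.of d = FreeGroup.mk [(d, true)] from rfl,
              FreeGroup.inv_mk]
            simp [FreeGroup.invRev]
          rw [this]; exact (Commute.refl _).inv_left
        · exact Commute.refl _
      have cL' : List.Chain' NC L' := by
        rw [hL] at cL; exact (List.isChain_append.mp cL).1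
      have tw' : (FreeGroup.mk L').toWord = L' := by
        rw [FreeGroup.toWord_mk, (reduce_eq_self_iff _).mpr cL']
      have hlen : L'.length ≤ n := by
        have := congrArg List.length hL
        simp at this
        omega
      have hcomm' : Commute (FreeGroup.mk L') (FreeGroup.of d ^ m) := by
        have : FreeGroup.mk L' = w * (FreeGroup.mk [(d, b)])⁻¹ := by
          rw [hw']; group
        rw [this]
        exact h.mul_left ((hu.pow_right m).inv_left)
      have := ih (FreeGroup.mk L') (by rw [tw']; exact hlen) hcomm'
      rw [hw']
      exact this.mul_left hu
    · -- contradiction: w (of c)^m w⁻¹ has too long a reduced word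
      exfalso
      set L := w.toWord with hLdef
      set R : List (α × Bool) := List.replicate m (c, true) with hR
      obtain ⟨m', rfl⟩ : ∃ m', m = m' + 1 := ⟨m - 1, by omega⟩
      have cR : List.Chain' NC R := (reduce_eq_self_iff _).mp (FreeGroup.reduce_replicate _ _)
      have cI : List.Chain' NC (FreeGroup.invRev L) := by
        apply (reduce_eq_self_iff _).mp
        rw [FreeGroup.reduce_invRev, FreeGroup.reduce_toWord]
      have hIL : FreeGroup.invRev L = (d, !b) :: FreeGroup.invRev L' := by
        rw [hL]
        simp [FreeGroup.invRev]
      have cX : List.Chain' NC (L ++ (R ++ FreeGroup.invRev L)) := by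
        show List.IsChain NC _
        rw [List.isChain_append]
        refine ⟨cL, ?_, ?_⟩
        · rw [List.isChain_append]
          refine ⟨cR, cI, ?_⟩
          intro p hp q hq
          rw [hR] at hp
          rw [List.getLast?_replicate] at hp
          rw [hIL] at hq
          simp at hp hq
          rw [← hp, ← hq]
          rintro ⟨h1, -⟩
          exact hdc h1.symm
        · intro p hp q hq
          rw [hL, List.getLast?_concat] at hp
          have hq' : q = (c, true) := by
            rw [hR] at hq
            rcases m' with _ | m' <;> simp [List.replicate_succ] at hq <;> tauto
          simp at hp
          rw [← hp, hq']
          rintro ⟨h1, -⟩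
          exact hdc h1
      have eX : FreeGroup.mk (L ++ (R ++ FreeGroup.invRev L)) = FreeGroup.of c ^ (m' + 1) := by
        rw [← FreeGroup.mul_mk, ← FreeGroup.mul_mk, ← FreeGroup.inv_mk]
        rw [hLdef, FreeGroup.mk_toWord, mk_replicate]
        rw [← mul_assoc]
        rw [h.eq, mul_assoc, mul_inv_cancel, mul_one]
      have eW := congrArg FreeGroup.toWord eX
      rw [FreeGroup.toWord_mk, (reduce_eq_self_iff _).mpr cX, FreeGroup.toWord_of_pow] at eW
      have hlen := congrArg List.length eW
      simp [hR] at hlen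
      have : L.length = 0 := by omega
      rw [hL] at this
      simp at this

lemma key_z (c : α) (m : ℤ) (hm : m ≠ 0) (w : FreeGroup α)
    (h : Commute w (FreeGroup.of c ^ m)) : Commute w (FreeGroup.of c) := by
  apply key c m.natAbs (by omega) w
  rcases Int.natAbs_eq m with h1 | h1
  · rwa [← zpow_natCast, ← h1]
  · have : FreeGroup.of c ^ (m.natAbs : ℤ) = (FreeGroup.of c ^ m)⁻¹ := by
      rw [← zpow_neg]
      congr 1
      omega
    rw [← zpow_natCast, this]
    exact h.inv_right

section Model

variable (k : ℕ) [NeZero k]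

abbrev F (k : ℕ) : Type := FreeGroup (ZMod k)

def tau : MulAut (F k) := FreeGroup.freeGroupCongr (Equiv.addRight (1 : ZMod k))

def sig : Multiplicative ℤ →* MulAut (F k) := zpowersHom _ (tau k)

abbrev Gp : Type := SemidirectProduct (F k) (Multiplicative ℤ) (sig k)

lemma tau_zpow_of (n : ℤ) : ∀ (i : ZMod k),
    (tau k ^ n) (FreeGroup.of i) = FreeGroup.of (i + (n : ZMod k)) := by
  induction n using Int.induction_on with
  | zero => intro i; simp
  | succ n ihn =>
    intro i
    have : (tau k ^ ((n : ℤ) + 1)) = (tau k ^ (n : ℤ)) * tau k := by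
      rw [zpow_add, zpow_one]
    rw [this]
    have ht : tau k (FreeGroup.of i) = FreeGroup.of (i + 1) := by
      simp [tau]
    calc ((tau k ^ (n:ℤ)) * tau k) (FreeGroup.of i)
        = (tau k ^ (n:ℤ)) (tau k (FreeGroup.of i)) := rfl
      _ = (tau k ^ (n:ℤ)) (FreeGroup.of (i+1)) := by rw [ht]
      _ = FreeGroup.of (i + ((n : ℤ) + 1 : ℤ)) := by
            rw [ihn (i+1)]; congr 1; push_cast; ring
  | pred n ihn =>
    intro i
    have : (tau k ^ ((-n : ℤ) - 1)) = (tau k ^ (-n : ℤ)) * (tau k)⁻¹ := by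
      rw [sub_eq_add_neg, zpow_add, zpow_neg_one]
    rw [this]
    have ht : (tau k)⁻¹ (FreeGroup.of i) = FreeGroup.of (i - 1) := by
      rw [MulAut.inv_def, MulEquiv.symm_apply_eq]
      simp [tau, sub_eq_add_neg]
    calc ((tau k ^ (-n:ℤ)) * (tau k)⁻¹) (FreeGroup.of i)
        = (tau k ^ (-n:ℤ)) ((tau k)⁻¹ (FreeGroup.of i)) := rfl
      _ = (tau k ^ (-n:ℤ)) (FreeGroup.of (i-1)) := by rw [ht]
      _ = FreeGroup.of (i + ((-n - 1 : ℤ) : ZMod k)) := by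
            rw [ihn (i-1)]; congr 1; push_cast; ring

lemma sig_of (r : Multiplicative ℤ) (i : ZMod k) :
    (sig k r) (FreeGroup.of i) = FreeGroup.of (i + (r.toAdd : ZMod k)) := by
  rw [sig, zpowersHom_apply, tau_zpow_of]

end Model

section ModelThm

variable {k : ℕ} [NeZero k]

def a0 : Gp k := SemidirectProduct.inl (FreeGroup.of (0 : ZMod k))

lemma conj_inl (g : Gp k) (v : F k) :
    g * SemidirectProduct.inl v * g⁻¹
      = SemidirectProduct.inl (g.left * (sig k g.right) v * g.left⁻¹) := by
  conv_lhs => rw [← SemidirectProduct.inl_left_mul_inr_right g]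
  rw [MonoidHom.map_mul, MonoidHom.map_mul, MonoidHom.map_inv, SemidirectProduct.inl_aut]
  group
  rw [MonoidHom.map_zpow]

lemma model (g : Gp k) :
    Subgroup.closure {(a0 : Gp k)} ⊓ ArtinGraph.conjP g (Subgroup.closure {a0}) =
      Subgroup.closure {(a0 : Gp k)} ∨
    Subgroup.closure {(a0 : Gp k)} ⊓ ArtinGraph.conjP g (Subgroup.closure {a0}) = ⊥ := by
  by_cases hbot : Subgroup.closure {(a0 : Gp k)} ⊓ ArtinGraph.conjP g (Subgroup.closure {a0}) = ⊥
  · exact Or.inr hbot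
  left
  obtain ⟨h, hmem, hne⟩ := (Subgroup.bot_or_exists_ne_one _).resolve_left hbot
  rw [← Subgroup.zpowers_eq_closure] at hmem
  obtain ⟨hA, hC⟩ := Subgroup.mem_inf.mp hmem
  obtain ⟨n, hn⟩ := Subgroup.mem_zpowers_iff.mp hA
  obtain ⟨y, hy, hgy⟩ := Subgroup.mem_map.mp hC
  obtain ⟨m, hm⟩ := Subgroup.mem_zpowers_iff.mp hy
  have hn0 : n ≠ 0 := by rintro rfl; rw [← hn] at hne; simp at hne
  have hm0 : m ≠ 0 := by
    rintro rfl
    rw [← hm] at hgy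
    simp at hgy
    rw [← hgy] at hne; simp at hne
  have heq : g * (a0 : Gp k) ^ m * g⁻¹ = (a0 : Gp k) ^ n := by
    rw [← hm, ← hn] at hgy
    simpa [MulAut.conj_apply, mul_assoc] using hgy
  set w : F k := g.left with hwdef
  set r : Multiplicative ℤ := g.right with hrdef
  set j : ZMod k := ((r.toAdd : ℤ) : ZMod k) with hjdef
  have expand : ∀ (p : ℤ), (a0 : Gp k) ^ p
      = SemidirectProduct.inl (FreeGroup.of (0:ZMod k) ^ p) := by
    intro p; rw [a0, ← map_zpow]
  have hsig : (sig k r) (FreeGroup.of (0 : ZMod k) ^ m) = FreeGroup.of j ^ m := by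
    rw [map_zpow, sig_of]
    norm_num
    rfl
  have hF : w * FreeGroup.of j ^ m * w⁻¹ = FreeGroup.of (0 : ZMod k) ^ n := by
    apply SemidirectProduct.inl_injective (φ := sig k)
    rw [← hsig, hwdef, hrdef, ← conj_inl, ← expand, ← expand]
    exact heq
  set pi : F k →* Multiplicative ℤ :=
    FreeGroup.lift (fun i => if i = (0:ZMod k) then Multiplicative.ofAdd (1:ℤ) else 1) with hpi
  have hpiF := congrArg pi hF
  rw [_root_.map_mul, _root_.map_mul, _root_.map_inv, _root_.map_zpow, _root_.map_zpow] at hpiF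
  rw [mul_comm (pi w), mul_assoc, mul_inv_cancel, mul_one] at hpiF
  rw [hpi] at hpiF
  simp only [FreeGroup.lift_apply_of, if_pos rfl] at hpiF
  have hj0 : j = 0 := by
    by_contra hj
    rw [if_neg hj, one_zpow] at hpiF
    have := congrArg Multiplicative.toAdd hpiF
    simp at this
    exact hn0 this.symm
  have hmn : m = n := by
    rw [if_pos hj0] at hpiF
    have := congrArg Multiplicative.toAdd hpiF
    simpa using this
  rw [hj0, hmn] at hF
  have hcomm : Commute w (FreeGroup.of (0:ZMod k)) := by
    apply key_z _ n hn0
    have : w * FreeGroup.of (0:ZMod k) ^ n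
        = FreeGroup.of (0:ZMod k) ^ n * w := by
      calc w * FreeGroup.of (0:ZMod k) ^ n
          = (w * FreeGroup.of (0:ZMod k) ^ n * w⁻¹) * w := by group
        _ = FreeGroup.of (0:ZMod k) ^ n * w := by rw [hF]
    exact this
  have hsig1 : (sig k r) (FreeGroup.of (0 : ZMod k)) = FreeGroup.of (0 : ZMod k) := by
    rw [sig_of, ← hjdef, hj0, add_zero]
  have hg0 : g * (a0 : Gp k) * g⁻¹ = a0 := by
    rw [show (a0 : Gp k) = SemidirectProduct.inl (FreeGroup.of (0:ZMod k)) from rfl]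
    rw [conj_inl, ← hwdef, ← hrdef, hsig1]
    congr 1
    rw [hcomm.eq]
    group
  apply inf_eq_left.mpr
  rw [Subgroup.closure_le]
  intro z hz
  simp only [Set.mem_singleton_iff] at hz
  subst hz
  exact Subgroup.mem_map.mpr ⟨a0, Subgroup.subset_closure rfl,
    by simpa [MulAut.conj_apply, mul_assoc] using hg0⟩

end ModelThm

section Iso
open ArtinGraph SemidirectProduct Stmt9Aux

variable (k : ℕ) [NeZero k]

lemma hom_word {G : Type*} [Group G] (g : FreeGroup Bool →* G) (u v : Bool) (j : ℕ) :
    g (ArtinGraph.word u v (2 * j)) = (g (FreeGroup.of u) * g (FreeGroup.of v)) ^ j := by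
  induction j generalizing u v with
  | zero => simp [ArtinGraph.word]
  | succ j ih =>
    have h2 : 2 * (j + 1) = (2 * j) + 1 + 1 := by ring
    rw [h2]
    show g (FreeGroup.of u * (FreeGroup.of v * ArtinGraph.word u v (2*j))) = _
    rw [_root_.map_mul, _root_.map_mul, ih, pow_succ']
    group

/-- the image of the generators -/
def fB : Bool → Gp k := fun v =>
  if v then (inl (FreeGroup.of (0:ZMod k)))⁻¹ * inr (Multiplicative.ofAdd (1:ℤ))
  else inl (FreeGroup.of (0:ZMod k))

lemma inr_pow_k :
    (inr (Multiplicative.ofAdd (1:ℤ)) : Gp k) ^ k = inr (Multiplicative.ofAdd (k:ℤ)) := by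
  rw [← map_pow]
  congr 1
  apply Multiplicative.toAdd.injective
  simp

lemma sig_k :
    (sig k (Multiplicative.ofAdd (k:ℤ))) (FreeGroup.of (0:ZMod k)) = FreeGroup.of (0:ZMod k) := by
  rw [sig_of]
  norm_num

lemma TA_comm :
    Commute ((inr (Multiplicative.ofAdd (1:ℤ)) : Gp k) ^ k) (inl (FreeGroup.of (0:ZMod k))) := by
  rw [inr_pow_k]
  have h := (SemidirectProduct.inl_aut (φ := sig k) (Multiplicative.ofAdd (k:ℤ))
    (FreeGroup.of (0:ZMod k))).symm
  rw [sig_k, MonoidHom.map_inv] at h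
  exact mul_inv_eq_iff_eq_mul.mp h

lemma hrels : ∀ r ∈ (edgeGraph k).rels, FreeGroup.lift (fB k) r = 1 := by
  rintro r ⟨u, v, hm, rfl⟩
  have huv : u ≠ v := by
    intro h; subst h; simp [edgeGraph] at hm
  have hmv : (edgeGraph k).m u v = 2 * k := by
    simp [edgeGraph, huv]
  rw [hmv, _root_.map_mul, _root_.map_inv, hom_word, hom_word, FreeGroup.lift_apply_of, FreeGroup.lift_apply_of,
    mul_inv_eq_one]
  set A : Gp k := inl (FreeGroup.of (0:ZMod k)) with hA
  set T : Gp k := inr (Multiplicative.ofAdd (1:ℤ)) with hT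
  have key1 : (A * (A⁻¹ * T)) ^ k = ((A⁻¹ * T) * A) ^ k := by
    have h1 : A * (A⁻¹ * T) = T := by group
    have h2 : (A⁻¹ * T) * A = A⁻¹ * T * A := by group
    rw [h1, h2]
    have h3 : A⁻¹ * T * A = (MulAut.conj A⁻¹) T := by
      rw [MulAut.conj_apply]; group
    rw [h3]
    rw [show ((MulAut.conj A⁻¹) T) ^ k = (MulAut.conj A⁻¹) (T ^ k) from
      (_root_.map_pow _ _ _).symm]
    rw [MulAut.conj_apply, inv_inv]
    have hc := (TA_comm k).eq
    rw [← hA, ← hT] at hc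
    rw [mul_assoc, hc]
    group
  rcases u <;> rcases v <;> simp at huv <;> simp only [fB, if_pos, if_neg, Bool.false_eq_true,
    ite_true, ite_false]
  · exact key1
  · exact key1.symm

/-- the forward homomorphism -/
def Phi : (edgeGraph k).ArtinGroup →* Gp k := PresentedGroup.toGroup (hrels k)

lemma Phi_false : Phi k ((edgeGraph k).gen false) = inl (FreeGroup.of (0:ZMod k)) := by
  have h := PresentedGroup.toGroup.of (f := fB k) (hrels k) (x := false)
  rw [show fB k false = inl (FreeGroup.of (0:ZMod k)) from rfl] at h
  exact h

lemma Phi_true : Phi k ((edgeGraph k).gen true)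
    = (inl (FreeGroup.of (0:ZMod k)))⁻¹ * inr (Multiplicative.ofAdd (1:ℤ)) := by
  have h := PresentedGroup.toGroup.of (f := fB k) (hrels k) (x := true)
  rw [show fB k true = (inl (FreeGroup.of (0:ZMod k)))⁻¹ * inr (Multiplicative.ofAdd (1:ℤ))
    from rfl] at h
  exact h

/-- elements of P -/
noncomputable def bP : (edgeGraph k).ArtinGroup := (edgeGraph k).gen false
noncomputable def cP : (edgeGraph k).ArtinGroup := (edgeGraph k).gen true
noncomputable def yP : (edgeGraph k).ArtinGroup := bP k * cP k

lemma relP : (bP k * cP k) ^ k = (cP k * bP k) ^ k := by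
  have hr : (ArtinGraph.word false true ((edgeGraph k).m false true) *
      (ArtinGraph.word true false ((edgeGraph k).m false true))⁻¹) ∈ (edgeGraph k).rels := by
    refine ⟨false, true, ?_, rfl⟩
    have : (k : ℕ) ≠ 0 := NeZero.ne k
    simp [edgeGraph]
    omega
  have h1 : PresentedGroup.mk (edgeGraph k).rels
      (ArtinGraph.word false true ((edgeGraph k).m false true) *
        (ArtinGraph.word true false ((edgeGraph k).m false true))⁻¹) = 1 := by
    apply (QuotientGroup.eq_one_iff _).mpr
    exact Subgroup.subset_normalClosure hr
  have hmv : (edgeGraph k).m false true = 2 * k := by simp [edgeGraph]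
  rw [hmv, _root_.map_mul, _root_.map_inv, hom_word, hom_word, mul_inv_eq_one] at h1
  have hof : ∀ v : Bool, PresentedGroup.mk (edgeGraph k).rels (FreeGroup.of v)
      = (edgeGraph k).gen v := fun _ => rfl
  rw [hof, hof] at h1
  exact h1

lemma yk_comm : Commute (yP k ^ k) (bP k) := by
  have h := relP k
  have hsc : SemiconjBy (bP k) (cP k * bP k) (bP k * cP k) := by
    rw [SemiconjBy, mul_assoc]
  have := (hsc.pow_right k).eq
  rw [← h] at this
  rw [Commute, SemiconjBy, yP]
  rw [this]

/-- B n = y^n b y^{-n} -/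
noncomputable def BP (n : ℤ) : (edgeGraph k).ArtinGroup := yP k ^ n * bP k * yP k ^ (-n)

lemma BP_add_k (n : ℤ) : BP k (n + k) = BP k n := by
  rw [BP, BP]
  have h1 : yP k ^ (n + (k:ℤ)) = yP k ^ n * yP k ^ (k:ℤ) := by rw [zpow_add]
  have h2 : yP k ^ (-(n + (k:ℤ))) = yP k ^ (-(k:ℤ)) * yP k ^ (-n) := by
    rw [← zpow_add]; ring_nf
  rw [h1, h2]
  have h3 : yP k ^ (k:ℤ) * bP k * yP k ^ (-(k:ℤ)) = bP k := by
    have := (yk_comm k).eq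
    rw [show yP k ^ (k:ℤ) = yP k ^ k from zpow_natCast _ _]
    rw [show yP k ^ (-(k:ℤ)) = (yP k ^ k)⁻¹ by rw [← zpow_natCast, ← zpow_neg]]
    rw [this]
    group
  calc yP k ^ n * yP k ^ (k:ℤ) * bP k * (yP k ^ (-(k:ℤ)) * yP k ^ (-n))
      = yP k ^ n * (yP k ^ (k:ℤ) * bP k * yP k ^ (-(k:ℤ))) * yP k ^ (-n) := by group
    _ = yP k ^ n * bP k * yP k ^ (-n) := by rw [h3]

lemma BP_cast_eq (mm nn : ℤ) (h : (mm : ZMod k) = (nn : ZMod k)) : BP k mm = BP k nn := by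
  have hdvd : (k : ℤ) ∣ (mm - nn) := by
    rwa [← ZMod.intCast_zmod_eq_zero_iff_dvd, Int.cast_sub, sub_eq_zero]
  obtain ⟨t, ht⟩ := hdvd
  have hmm : mm = nn + (k:ℤ) * t := by omega
  subst hmm
  clear h ht
  induction t using Int.induction_on with
  | zero => norm_num
  | succ t iht =>
    have : nn + (k:ℤ) * ((t:ℤ) + 1) = (nn + (k:ℤ) * t) + k := by ring
    rw [this, BP_add_k, iht]
  | pred t iht =>
    have : (nn + (k:ℤ) * (-(t:ℤ))) = (nn + (k:ℤ) * (-(t:ℤ) - 1)) + k := by ring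
    rw [← iht, this, BP_add_k]


lemma val_cast (i : ZMod k) : ((i.val : ℤ) : ZMod k) = i := by
  push_cast
  exact ZMod.natCast_rightInverse i

noncomputable def f1 : F k →* (edgeGraph k).ArtinGroup :=
  FreeGroup.lift (fun i : ZMod k => BP k (i.val : ℤ))

noncomputable def f2 : Multiplicative ℤ →* (edgeGraph k).ArtinGroup :=
  zpowersHom _ (yP k)

lemma compat_gen (n : ℤ) (i : ZMod k) :
    f1 k ((sig k (Multiplicative.ofAdd n)) (FreeGroup.of i))
      = yP k ^ n * f1 k (FreeGroup.of i) * (yP k ^ n)⁻¹ := by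
  rw [sig_of, f1, FreeGroup.lift_apply_of, FreeGroup.lift_apply_of]
  have h1 : yP k ^ n * BP k (i.val:ℤ) * (yP k ^ n)⁻¹ = BP k (n + i.val) := by
    rw [BP, BP]; group
  rw [h1]
  apply BP_cast_eq
  rw [show Multiplicative.toAdd (Multiplicative.ofAdd n) = n from rfl, val_cast,
    Int.cast_add, val_cast]
  ring

lemma compat : ∀ g : Multiplicative ℤ, (f1 k).comp ((sig k g).toMonoidHom)
    = (MulAut.conj (f2 k g)).toMonoidHom.comp (f1 k) := by
  intro g
  apply FreeGroup.ext_hom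
  intro i
  simp only [MonoidHom.comp_apply, MulEquiv.coe_toMonoidHom, MulAut.conj_apply]
  have h := compat_gen k (Multiplicative.toAdd g) i
  rw [show Multiplicative.ofAdd (Multiplicative.toAdd g) = g from rfl] at h
  rw [h]
  rfl

noncomputable def Psi : Gp k →* (edgeGraph k).ArtinGroup :=
  SemidirectProduct.lift (f1 k) (f2 k) (compat k)

lemma Psi_inl_of (i : ZMod k) :
    Psi k (inl (FreeGroup.of i)) = BP k (i.val : ℤ) := by
  rw [Psi, SemidirectProduct.lift_inl, f1, FreeGroup.lift_apply_of]

lemma Psi_inr (g : Multiplicative ℤ) :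
    Psi k (inr g) = yP k ^ (Multiplicative.toAdd g) := by
  rw [Psi, SemidirectProduct.lift_inr]
  rfl

lemma PsiPhi (p : (edgeGraph k).ArtinGroup) : Psi k (Phi k p) = p := by
  have hid : (Psi k).comp (Phi k) = MonoidHom.id _ := by
    apply PresentedGroup.ext
    intro x
    rcases x with _ | _
    · -- false
      show Psi k (Phi k ((edgeGraph k).gen false)) = (edgeGraph k).gen false
      rw [Phi_false, Psi_inl_of]
      rw [show ((0:ZMod k).val : ℤ) = 0 by simp [ZMod.val_zero]]
      rw [BP]
      simp only [zpow_zero, one_mul, neg_zero, mul_one]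
      rfl
    · -- true
      show Psi k (Phi k ((edgeGraph k).gen true)) = (edgeGraph k).gen true
      rw [Phi_true, _root_.map_mul, _root_.map_inv, Psi_inl_of, Psi_inr]
      rw [show ((0:ZMod k).val : ℤ) = 0 by simp [ZMod.val_zero]]
      rw [BP]
      simp only [zpow_zero, one_mul, neg_zero, mul_one, zpow_one]
      rw [show Multiplicative.toAdd (Multiplicative.ofAdd (1:ℤ)) = 1 from rfl]
      rw [yP, zpow_one]
      rw [show bP k = (edgeGraph k).gen false from rfl]
      group
      rw [show cP k = (edgeGraph k).gen true from rfl]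
  exact DFunLike.congr_fun hid p

lemma Phi_y : Phi k (yP k) = inr (Multiplicative.ofAdd (1:ℤ)) := by
  rw [yP, _root_.map_mul, show bP k = (edgeGraph k).gen false from rfl,
    show cP k = (edgeGraph k).gen true from rfl, Phi_false, Phi_true]
  group

lemma Phi_BP (m : ℤ) : Phi k (BP k m) = inl (FreeGroup.of ((m : ZMod k))) := by
  have h := SemidirectProduct.inl_aut (φ := sig k) (Multiplicative.ofAdd (1:ℤ) ^ m)
    (FreeGroup.of (0:ZMod k))
  rw [sig_of, show Multiplicative.toAdd (Multiplicative.ofAdd (1:ℤ) ^ m) = m by simp,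
    zero_add] at h
  rw [BP, _root_.map_mul, _root_.map_mul, _root_.map_zpow, _root_.map_zpow, Phi_y,
    show bP k = (edgeGraph k).gen false from rfl, Phi_false, h,
    show (Multiplicative.ofAdd (1:ℤ) ^ m)⁻¹ = Multiplicative.ofAdd (1:ℤ) ^ (-m) from
      (zpow_neg _ _).symm,
    _root_.map_zpow inr, _root_.map_zpow inr]

lemma PhiPsi (g : Gp k) : Phi k (Psi k g) = g := by
  have hid : (Phi k).comp (Psi k) = MonoidHom.id _ := by
    apply SemidirectProduct.hom_ext
    · apply FreeGroup.ext_hom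
      intro i
      simp only [MonoidHom.comp_apply, MonoidHom.id_apply]
      rw [Psi_inl_of, Phi_BP, val_cast]
    · apply MonoidHom.ext_mint
      simp only [MonoidHom.comp_apply, MonoidHom.id_apply]
      rw [Psi_inr, show Multiplicative.toAdd (Multiplicative.ofAdd (1:ℤ)) = 1 from rfl,
        zpow_one, Phi_y]
  exact DFunLike.congr_fun hid g

end Iso

end Stmt9Aux

open Stmt9Aux

open ArtinGraph in
/-- in the Artin group `⟨a, x ∣ (ax)^k = (xa)^k⟩` (label `2k`,
`k ≥ 1`), for any `g` the intersection `⟨a⟩ ∩ g⟨a⟩g⁻¹` is `⟨a⟩` or trivial.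
Here `a` is the generator for `false` and `x` the one for `true`. -/
theorem stmt9 (k : ℕ) (hk : 1 ≤ k) (g : (edgeGraph k).ArtinGroup) :
    Subgroup.closure {(edgeGraph k).gen false} ⊓
        conjP g (Subgroup.closure {(edgeGraph k).gen false}) =
      Subgroup.closure {(edgeGraph k).gen false} ∨
    Subgroup.closure {(edgeGraph k).gen false} ⊓
        conjP g (Subgroup.closure {(edgeGraph k).gen false}) = ⊥ := by
  haveI : NeZero k := ⟨by omega⟩
  have hinj : Function.Injective (Phi k) :=
    Function.LeftInverse.injective (PsiPhi k)
  have hmapA : Subgroup.map (Phi k) (Subgroup.closure {(edgeGraph k).gen false})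
      = Subgroup.closure {(Stmt9Aux.a0 : Stmt9Aux.Gp k)} := by
    rw [MonoidHom.map_closure, Set.image_singleton, Phi_false]
    rfl
  have hcomp : (MulAut.conj (Phi k g)).toMonoidHom.comp (Phi k)
      = (Phi k).comp (MulAut.conj g).toMonoidHom := by
    apply MonoidHom.ext
    intro z
    simp [MulAut.conj_apply]
  have hconj : Subgroup.map (Phi k) (conjP g (Subgroup.closure {(edgeGraph k).gen false}))
      = conjP (Phi k g) (Subgroup.closure {(Stmt9Aux.a0 : Stmt9Aux.Gp k)}) := by
    rw [conjP, conjP, Subgroup.map_map, ← hcomp, ← Subgroup.map_map, hmapA]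
  rcases Stmt9Aux.model (Phi k g) with hc | hc
  · left
    apply Subgroup.map_injective hinj
    rw [Subgroup.map_inf _ _ _ hinj, hmapA, hconj, hc]
  · right
    apply Subgroup.map_injective hinj
    rw [Subgroup.map_inf _ _ _ hinj, hmapA, hconj, hc, Subgroup.map_bot]
end

section
/- Let Γ be an even FC-type Artin graph, x ∈ V a vertex with st(x) = V, and ρ_x : G_Γ → ⟨x⟩ ≅ ℤ the retraction onto x. Then ker ρ_x is isomorphic to the Artin group G_Δ, where Δ has vertex set {(u,i) : u ∈ lk(x), 0 ≤ i ≤ m_{u,x}/2 − 1}, an edge between (u,i) and (v,j) (for u ≠ v) whenever {u,v} ∈ E, with label m_{u,v}; the isomorphism sends (v,n) to x^n v x^{-n}. -/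
open scoped Classical in
open ArtinGraph in
/-- The Artin graph `Δ` with vertices `(u, i)`, `u ∈ lk(x)`, `0 ≤ i < m_{u,x}/2`,
an edge between `(u,i)` and `(v,j)` (for `u ≠ v`) whenever `{u,v} ∈ E`, with the
same label `m_{u,v}`. -/
noncomputable def lkGraph {V : Type} (Γ : ArtinGraph V) (x : V) :
    ArtinGraph {p : V × ℕ // Γ.m p.1 x ≠ 0 ∧ p.2 < Γ.m p.1 x / 2} where
  m p q := if p.val.1 = q.val.1 then 0 else Γ.m p.val.1 q.val.1
  symm p q := by
    try dsimp only
    by_cases h : p.val.1 = q.val.1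
    · rw [if_pos h, if_pos h.symm]
    · rw [if_neg h, if_neg (fun hh => h hh.symm)]
      exact Γ.symm _ _
  loopless p := by simp
  ne_one p q := by
    try dsimp only
    split
    · simp
    · exact Γ.ne_one _ _


namespace RS
open ArtinGraph

section GroupLemmas
variable {G : Type*} [Group G]

def alt (a b : G) : ℕ → G
  | 0 => 1
  | n + 1 => a * alt b a n

@[simp] lemma alt_zero (a b : G) : alt a b 0 = 1 := rfl

lemma alt_succ (a b : G) (n : ℕ) : alt a b (n + 1) = a * alt b a n := rfl

lemma hom_alt {W : Type} {H : Type*} [Group H] (F : FreeGroup W →* H) (u v : W) (n : ℕ) :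
    F (ArtinGraph.word u v n) = alt (F (FreeGroup.of u)) (F (FreeGroup.of v)) n := by
  induction n generalizing u v with
  | zero => simp [ArtinGraph.word]
  | succ n ih => simp [ArtinGraph.word, alt_succ, ih]

lemma alt_even (a b : G) (k : ℕ) : alt a b (2 * k) = (a * b) ^ k := by
  induction k generalizing a b with
  | zero => simp
  | succ k ih =>
      have h : 2 * (k + 1) = 2 * k + 1 + 1 := by ring
      rw [h, alt_succ, alt_succ, ih, pow_succ']
      group

def pc (a b : G) : ℕ → G
  | 0 => 1
  | k + 1 => pc a b k * (a ^ k * b * (a ^ k)⁻¹)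

@[simp] lemma pc_zero (a b : G) : pc a b 0 = 1 := rfl

lemma pc_succ (a b : G) (k : ℕ) : pc a b (k + 1) = pc a b k * (a ^ k * b * (a ^ k)⁻¹) := rfl

lemma pc_succ' (a b : G) (k : ℕ) : pc a b (k + 1) = b * (a * pc a b k * a⁻¹) := by
  induction k with
  | zero => simp [pc]
  | succ k ih =>
      conv_lhs => rw [pc_succ a b (k + 1), ih]
      rw [pc_succ a b k]
      group

lemma pow_eq_pc (a b : G) (k : ℕ) : (b * a) ^ k = pc a b k * a ^ k := by
  induction k with
  | zero => simp
  | succ k ih =>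
      rw [pow_succ', ih, pc_succ', pow_succ']
      group

lemma braid_iff (a b : G) (k : ℕ) : (b * a) ^ k = (a * b) ^ k ↔ a * pc a b k = pc a b k * a := by
  have hab : (a * b) ^ k = a * (b * a) ^ k * a⁻¹ := by
    have h : a * b = a * (b * a) * a⁻¹ := by group
    rw [h, conj_pow]
  rw [hab, pow_eq_pc]
  constructor
  · intro h
    have h1 : pc a b k * a ^ k * a = a * pc a b k * a ^ k := by rw [h]; group
    have h2 : (pc a b k * a) * a ^ k = (a * pc a b k) * a ^ k := by
      rw [show pc a b k * a * a ^ k = pc a b k * a ^ k * a by group, h1]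
    exact (mul_right_cancel h2).symm
  · intro h
    have h5 : a * pc a b k * a⁻¹ = pc a b k := by rw [h]; group
    conv_lhs => rw [← h5]
    group

lemma braid_of_comm (a b : G) (k : ℕ) (h : a * pc a b k = pc a b k * a) :
    (b * a) ^ k = (a * b) ^ k := (braid_iff a b k).2 h

lemma conj_pow_eq (a b : G) (k : ℕ) (h : (b * a) ^ k = (a * b) ^ k) :
    a ^ k * b * (a ^ k)⁻¹ = (pc a b k)⁻¹ * b * pc a b k := by
  have hc : a * pc a b k = pc a b k * a := (braid_iff a b k).1 h
  have h1 : pc a b k * (a ^ k * b * (a ^ k)⁻¹) = b * (a * pc a b k * a⁻¹) := by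
    rw [← pc_succ, pc_succ']
  rw [hc] at h1
  have h2 : pc a b k * (a ^ k * b * (a ^ k)⁻¹) = b * pc a b k := by rw [h1]; group
  calc a ^ k * b * (a ^ k)⁻¹ = (pc a b k)⁻¹ * (pc a b k * (a ^ k * b * (a ^ k)⁻¹)) := by group
    _ = (pc a b k)⁻¹ * (b * pc a b k) := by rw [h2]
    _ = (pc a b k)⁻¹ * b * pc a b k := by group

end GroupLemmas
end RS

namespace RS
open ArtinGraph

section ArtinLemmas
variable {W : Type} (Θ : ArtinGraph W)

lemma gen_braid {u v : W} (h : Θ.m u v ≠ 0) :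
    alt (Θ.gen u) (Θ.gen v) (Θ.m u v) = alt (Θ.gen v) (Θ.gen u) (Θ.m u v) := by
  have hr : (QuotientGroup.mk' (Subgroup.normalClosure Θ.rels))
      (word u v (Θ.m u v) * (word v u (Θ.m u v))⁻¹) = 1 :=
    (QuotientGroup.eq_one_iff _).2
      (Subgroup.subset_normalClosure ⟨u, v, h, rfl⟩)
  rw [map_mul, map_inv, mul_inv_eq_one, hom_alt, hom_alt] at hr
  exact hr

lemma gen_braid_pow {u v : W} (h : Θ.m u v ≠ 0) (he : Even (Θ.m u v)) :
    (Θ.gen u * Θ.gen v) ^ (Θ.m u v / 2) = (Θ.gen v * Θ.gen u) ^ (Θ.m u v / 2) := by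
  obtain ⟨k, hk⟩ := he
  have hm : Θ.m u v = 2 * k := by omega
  have hk2 : Θ.m u v / 2 = k := by omega
  have hb := gen_braid Θ h
  rw [hm, alt_even, alt_even] at hb
  rw [hk2]
  exact hb

lemma gen_comm {u v : W} (h : Θ.m u v = 2) : Commute (Θ.gen u) (Θ.gen v) := by
  have hb := gen_braid_pow Θ (u := u) (v := v) (by omega) ⟨1, by omega⟩
  rw [h] at hb
  norm_num at hb
  exact hb

end ArtinLemmas
end RS

namespace RS
open ArtinGraph

section Main
variable {V : Type} (Γ : ArtinGraph V) (x : V)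

/-- Total version of the generators of the link Artin group. -/
noncomputable def gD (v : V) (n : ℕ) : (lkGraph Γ x).ArtinGroup :=
  if h : Γ.m v x ≠ 0 ∧ n < Γ.m v x / 2 then (lkGraph Γ x).gen ⟨(v, n), h⟩ else 1

/-- The product `v_0 v_1 ⋯ v_{n-1}` in the link Artin group. -/
noncomputable def cD (v : V) : ℕ → (lkGraph Γ x).ArtinGroup
  | 0 => 1
  | n + 1 => cD v n * gD Γ x v n

@[simp] lemma cD_zero (v : V) : cD Γ x v 0 = 1 := rfl

lemma cD_succ (v : V) (n : ℕ) : cD Γ x v (n + 1) = cD Γ x v n * gD Γ x v n := rfl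

lemma gD_valid (v : V) (n : ℕ) (h : Γ.m v x ≠ 0 ∧ n < Γ.m v x / 2) :
    gD Γ x v n = (lkGraph Γ x).gen ⟨(v, n), h⟩ := dif_pos h

lemma gD_invalid (v : V) (n : ℕ) (h : ¬(Γ.m v x ≠ 0 ∧ n < Γ.m v x / 2)) :
    gD Γ x v n = 1 := dif_neg h

lemma lkm_ne (p q : {p : V × ℕ // Γ.m p.1 x ≠ 0 ∧ p.2 < Γ.m p.1 x / 2})
    (h : p.val.1 ≠ q.val.1) : (lkGraph Γ x).m p q = Γ.m p.val.1 q.val.1 := by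
  simp only [lkGraph]
  rw [if_neg h]

lemma lkm_eq (p q : {p : V × ℕ // Γ.m p.1 x ≠ 0 ∧ p.2 < Γ.m p.1 x / 2})
    (h : p.val.1 = q.val.1) : (lkGraph Γ x).m p q = 0 := by
  simp only [lkGraph]
  rw [if_pos h]

lemma relD {u v : V} (huv : u ≠ v) (h : Γ.m u v ≠ 0) (he : Even (Γ.m u v)) (i j : ℕ) :
    (gD Γ x u i * gD Γ x v j) ^ (Γ.m u v / 2) =
      (gD Γ x v j * gD Γ x u i) ^ (Γ.m u v / 2) := by
  by_cases hi : Γ.m u x ≠ 0 ∧ i < Γ.m u x / 2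
  · by_cases hj : Γ.m v x ≠ 0 ∧ j < Γ.m v x / 2
    · have hm : (lkGraph Γ x).m ⟨(u, i), hi⟩ ⟨(v, j), hj⟩ = Γ.m u v := lkm_ne Γ x _ _ huv
      have hb := gen_braid_pow (lkGraph Γ x) (u := ⟨(u, i), hi⟩) (v := ⟨(v, j), hj⟩)
        (by rw [hm]; exact h) (by rw [hm]; exact he)
      rw [hm] at hb
      rw [gD_valid Γ x u i hi, gD_valid Γ x v j hj]
      exact hb
    · rw [gD_invalid Γ x v j hj]
      simp
  · rw [gD_invalid Γ x u i hi]
    simp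

lemma commD {u v : V} (huv : u ≠ v) (h2 : Γ.m u v = 2) (i j : ℕ) :
    Commute (gD Γ x u i) (gD Γ x v j) := by
  have hb := relD Γ x huv (by omega) ⟨1, by omega⟩ i j
  rw [h2] at hb
  norm_num at hb
  exact hb

lemma comm_cD {u v : V} (huv : u ≠ v) (h2 : Γ.m u v = 2) (n j : ℕ) :
    Commute (cD Γ x u n) (gD Γ x v j) := by
  induction n with
  | zero => exact Commute.one_left _
  | succ n ih => exact Commute.mul_left ih (commD Γ x huv h2 n j)

variable (hEven : Γ.IsEven)
include hEven

lemma m_even2 {v : V} (h : Γ.m v x ≠ 0) : Γ.m v x = 2 * (Γ.m v x / 2) := by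
  obtain ⟨k, hk⟩ := hEven v x
  omega

lemma kpos {v : V} (h : Γ.m v x ≠ 0) : 0 < Γ.m v x / 2 := by
  obtain ⟨k, hk⟩ := hEven v x
  omega

omit hEven

variable (hFC : Γ.IsFC)
include hFC

lemma fc_or {u v : V} (hu : Γ.m u x ≠ 0) (hv : Γ.m v x ≠ 0) (huv : Γ.m u v ≠ 0) :
    Γ.m u x = 2 ∨ Γ.m v x = 2 := by
  have hxu : Γ.m x u ≠ 0 := by rw [Γ.symm]; exact hu
  rcases hFC u v x huv hv hxu with ⟨_, h⟩ | ⟨h, _⟩ | ⟨_, h⟩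
  · exact Or.inr h
  · exact Or.inr h
  · exact Or.inl (by rw [Γ.symm]; exact h)

lemma fc_both {u v : V} (hu : Γ.m u x ≠ 0) (hv : Γ.m v x ≠ 0) (huv : Γ.m u v ≠ 0)
    (hne2 : Γ.m u v ≠ 2) : Γ.m u x = 2 ∧ Γ.m v x = 2 := by
  have hxu : Γ.m x u ≠ 0 := by rw [Γ.symm]; exact hu
  rcases hFC u v x huv hv hxu with ⟨h, _⟩ | ⟨h1, h2⟩ | ⟨h, _⟩
  · exact absurd h hne2
  · exact ⟨by rw [Γ.symm]; exact h2, h1⟩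
  · exact absurd h hne2

end Main
end RS

namespace RS
open ArtinGraph

section Shift
variable {V : Type} (Γ : ArtinGraph V) (x : V)

/-- The image of the generator `v_n` under the shift endomorphism. -/
noncomputable def sE (v : V) (n : ℕ) : (lkGraph Γ x).ArtinGroup :=
  if n + 1 < Γ.m v x / 2 then gD Γ x v (n + 1)
  else (cD Γ x v (Γ.m v x / 2))⁻¹ * gD Γ x v 0 * cD Γ x v (Γ.m v x / 2)

/-- The image of the generator `v_n` under the inverse shift endomorphism. -/
noncomputable def tE (v : V) (n : ℕ) : (lkGraph Γ x).ArtinGroup :=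
  if n = 0 then
    cD Γ x v (Γ.m v x / 2) * gD Γ x v (Γ.m v x / 2 - 1) * (cD Γ x v (Γ.m v x / 2))⁻¹
  else gD Γ x v (n - 1)

lemma comm_sE {u v : V} (huv : u ≠ v) (h2 : Γ.m u v = 2) (i j : ℕ) :
    Commute (sE Γ x u i) (gD Γ x v j) := by
  unfold sE
  split
  · exact commD Γ x huv h2 _ j
  · exact Commute.mul_left
      (Commute.mul_left (comm_cD Γ x huv h2 _ j).inv_left (commD Γ x huv h2 0 j))
      (comm_cD Γ x huv h2 _ j)

lemma comm_tE {u v : V} (huv : u ≠ v) (h2 : Γ.m u v = 2) (i j : ℕ) :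
    Commute (tE Γ x u i) (gD Γ x v j) := by
  unfold tE
  split
  · exact Commute.mul_left
      (Commute.mul_left (comm_cD Γ x huv h2 _ j) (commD Γ x huv h2 _ j))
      (comm_cD Γ x huv h2 _ j).inv_left
  · exact commD Γ x huv h2 _ j

lemma sE_two {v : V} (h2 : Γ.m v x = 2) : sE Γ x v 0 = gD Γ x v 0 := by
  unfold sE
  rw [h2]
  norm_num
  rw [cD_succ, cD_zero, one_mul]
  group

lemma tE_two {v : V} (h2 : Γ.m v x = 2) : tE Γ x v 0 = gD Γ x v 0 := by
  unfold tE
  rw [h2]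
  norm_num
  rw [cD_succ, cD_zero, one_mul]
  group

/-- The shift endomorphism `v_n ↦ v_{n+1}` of the link Artin group. -/
noncomputable def σh (hEven : Γ.IsEven) (hFC : Γ.IsFC) :
    (lkGraph Γ x).ArtinGroup →* (lkGraph Γ x).ArtinGroup :=
  PresentedGroup.toGroup (f := fun p => sE Γ x p.val.1 p.val.2) (by
    rintro r ⟨p, q, hM, rfl⟩
    obtain ⟨⟨u, i⟩, hp⟩ := p
    obtain ⟨⟨v, j⟩, hq⟩ := q
    rw [map_mul, map_inv, mul_inv_eq_one, hom_alt, hom_alt]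
    simp only [FreeGroup.lift_apply_of]
    have hne : u ≠ v := fun h => hM (lkm_eq Γ x _ _ h)
    have hm0 : Γ.m u v ≠ 0 := by rwa [lkm_ne Γ x _ _ hne] at hM
    rw [lkm_ne Γ x _ _ hne]
    obtain ⟨k, hk⟩ := hEven u v
    rw [show Γ.m u v = 2 * k from by omega, alt_even, alt_even]
    by_cases h2 : Γ.m u v = 2
    · rw [show k = 1 from by omega, pow_one, pow_one]
      rcases fc_or Γ x hFC hp.1 hq.1 hm0 with hux | hvx
      · have hi0 : i = 0 := by have := hp.2; omega
        subst hi0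
        rw [sE_two Γ x hux]
        exact (comm_sE Γ x hne.symm (by rw [Γ.symm]; exact h2) j 0).symm
      · have hj0 : j = 0 := by have := hq.2; omega
        subst hj0
        rw [sE_two Γ x hvx]
        exact comm_sE Γ x hne h2 i 0
    · obtain ⟨hux, hvx⟩ := fc_both Γ x hFC hp.1 hq.1 hm0 h2
      have hi0 : i = 0 := by have := hp.2; omega
      have hj0 : j = 0 := by have := hq.2; omega
      subst hi0; subst hj0
      rw [sE_two Γ x hux, sE_two Γ x hvx]
      have h := relD Γ x hne hm0 ⟨k, by omega⟩ 0 0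
      rwa [show Γ.m u v / 2 = k from by omega] at h)

/-- The inverse shift endomorphism `v_n ↦ v_{n-1}` of the link Artin group. -/
noncomputable def τh (hEven : Γ.IsEven) (hFC : Γ.IsFC) :
    (lkGraph Γ x).ArtinGroup →* (lkGraph Γ x).ArtinGroup :=
  PresentedGroup.toGroup (f := fun p => tE Γ x p.val.1 p.val.2) (by
    rintro r ⟨p, q, hM, rfl⟩
    obtain ⟨⟨u, i⟩, hp⟩ := p
    obtain ⟨⟨v, j⟩, hq⟩ := q
    rw [map_mul, map_inv, mul_inv_eq_one, hom_alt, hom_alt]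
    simp only [FreeGroup.lift_apply_of]
    have hne : u ≠ v := fun h => hM (lkm_eq Γ x _ _ h)
    have hm0 : Γ.m u v ≠ 0 := by rwa [lkm_ne Γ x _ _ hne] at hM
    rw [lkm_ne Γ x _ _ hne]
    obtain ⟨k, hk⟩ := hEven u v
    rw [show Γ.m u v = 2 * k from by omega, alt_even, alt_even]
    by_cases h2 : Γ.m u v = 2
    · rw [show k = 1 from by omega, pow_one, pow_one]
      rcases fc_or Γ x hFC hp.1 hq.1 hm0 with hux | hvx
      · have hi0 : i = 0 := by have := hp.2; omega
        subst hi0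
        rw [tE_two Γ x hux]
        exact (comm_tE Γ x hne.symm (by rw [Γ.symm]; exact h2) j 0).symm
      · have hj0 : j = 0 := by have := hq.2; omega
        subst hj0
        rw [tE_two Γ x hvx]
        exact comm_tE Γ x hne h2 i 0
    · obtain ⟨hux, hvx⟩ := fc_both Γ x hFC hp.1 hq.1 hm0 h2
      have hi0 : i = 0 := by have := hp.2; omega
      have hj0 : j = 0 := by have := hq.2; omega
      subst hi0; subst hj0
      rw [tE_two Γ x hux, tE_two Γ x hvx]
      have h := relD Γ x hne hm0 ⟨k, by omega⟩ 0 0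
      rwa [show Γ.m u v / 2 = k from by omega] at h)

end Shift
end RS

namespace RS
open ArtinGraph

section ShiftLemmas
variable {V : Type} (Γ : ArtinGraph V) (x : V) (hEven : Γ.IsEven) (hFC : Γ.IsFC)

lemma sE_pos {v : V} {n : ℕ} (h : n + 1 < Γ.m v x / 2) :
    sE Γ x v n = gD Γ x v (n + 1) := by unfold sE; rw [if_pos h]

lemma sE_neg {v : V} {n : ℕ} (h : ¬ n + 1 < Γ.m v x / 2) :
    sE Γ x v n = (cD Γ x v (Γ.m v x / 2))⁻¹ * gD Γ x v 0 * cD Γ x v (Γ.m v x / 2) := by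
  unfold sE; rw [if_neg h]

lemma tE_zero (v : V) :
    tE Γ x v 0 = cD Γ x v (Γ.m v x / 2) * gD Γ x v (Γ.m v x / 2 - 1) *
      (cD Γ x v (Γ.m v x / 2))⁻¹ := by unfold tE; rw [if_pos rfl]

lemma tE_pos {v : V} {n : ℕ} (h : n ≠ 0) : tE Γ x v n = gD Γ x v (n - 1) := by
  unfold tE; rw [if_neg h]

lemma σh_gD {v : V} {n : ℕ} (h : Γ.m v x ≠ 0 ∧ n < Γ.m v x / 2) :
    σh Γ x hEven hFC (gD Γ x v n) = sE Γ x v n := by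
  rw [gD_valid Γ x v n h]
  exact PresentedGroup.toGroup.of _

lemma τh_gD {v : V} {n : ℕ} (h : Γ.m v x ≠ 0 ∧ n < Γ.m v x / 2) :
    τh Γ x hEven hFC (gD Γ x v n) = tE Γ x v n := by
  rw [gD_valid Γ x v n h]
  exact PresentedGroup.toGroup.of _

lemma σh_cD {v : V} (hv : Γ.m v x ≠ 0) :
    ∀ n, n < Γ.m v x / 2 →
      σh Γ x hEven hFC (cD Γ x v n) = (gD Γ x v 0)⁻¹ * cD Γ x v (n + 1) := by
  intro n
  induction n with
  | zero =>
      intro _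
      rw [cD_zero, map_one, cD_succ, cD_zero, one_mul, inv_mul_cancel]
  | succ n ih =>
      intro h
      rw [cD_succ, map_mul, ih (by omega), σh_gD Γ x hEven hFC ⟨hv, by omega⟩,
        sE_pos Γ x h, cD_succ Γ x v (n + 1), mul_assoc]

lemma σh_c {v : V} (hv : Γ.m v x ≠ 0) :
    σh Γ x hEven hFC (cD Γ x v (Γ.m v x / 2)) = cD Γ x v (Γ.m v x / 2) := by
  have hk := kpos Γ x hEven hv
  have h1 : Γ.m v x / 2 - 1 + 1 = Γ.m v x / 2 := by omega
  have h2 : cD Γ x v (Γ.m v x / 2) =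
      cD Γ x v (Γ.m v x / 2 - 1) * gD Γ x v (Γ.m v x / 2 - 1) := by
    rw [← cD_succ, h1]
  rw [h2, map_mul, σh_cD Γ x hEven hFC hv _ (by omega), σh_gD Γ x hEven hFC ⟨hv, by omega⟩,
    sE_neg Γ x (by omega : ¬ Γ.m v x / 2 - 1 + 1 < Γ.m v x / 2), h1, ← h2]
  group

lemma τh_cD {v : V} (hv : Γ.m v x ≠ 0) :
    ∀ n, n + 1 ≤ Γ.m v x / 2 →
      τh Γ x hEven hFC (cD Γ x v (n + 1)) = tE Γ x v 0 * cD Γ x v n := by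
  intro n
  induction n with
  | zero =>
      intro h
      rw [cD_succ, cD_zero, one_mul, mul_one, τh_gD Γ x hEven hFC ⟨hv, by omega⟩]
  | succ n ih =>
      intro h
      rw [cD_succ, map_mul, ih (by omega), τh_gD Γ x hEven hFC ⟨hv, by omega⟩,
        tE_pos Γ x (Nat.succ_ne_zero n), Nat.succ_sub_one, cD_succ Γ x v n, mul_assoc]

lemma τh_c {v : V} (hv : Γ.m v x ≠ 0) :
    τh Γ x hEven hFC (cD Γ x v (Γ.m v x / 2)) = cD Γ x v (Γ.m v x / 2) := by
  have hk := kpos Γ x hEven hv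
  have h1 : Γ.m v x / 2 - 1 + 1 = Γ.m v x / 2 := by omega
  have h2 : cD Γ x v (Γ.m v x / 2) =
      cD Γ x v (Γ.m v x / 2 - 1) * gD Γ x v (Γ.m v x / 2 - 1) := by
    rw [← cD_succ, h1]
  have h3 := τh_cD Γ x hEven hFC hv (Γ.m v x / 2 - 1) (by omega)
  rw [h1] at h3
  rw [h3, tE_zero Γ x, h2]
  group

lemma τσ_gen (v : V) (n : ℕ) (hv : Γ.m v x ≠ 0) (hn : n < Γ.m v x / 2) :
    τh Γ x hEven hFC (σh Γ x hEven hFC (gD Γ x v n)) = gD Γ x v n := by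
  rw [σh_gD Γ x hEven hFC ⟨hv, hn⟩]
  by_cases hc : n + 1 < Γ.m v x / 2
  · rw [sE_pos Γ x hc, τh_gD Γ x hEven hFC ⟨hv, hc⟩, tE_pos Γ x (Nat.succ_ne_zero n),
      Nat.succ_sub_one]
  · rw [sE_neg Γ x hc, map_mul, map_mul, map_inv, τh_c Γ x hEven hFC hv,
      τh_gD Γ x hEven hFC ⟨hv, kpos Γ x hEven hv⟩, tE_zero Γ x,
      show Γ.m v x / 2 - 1 = n from by omega]
    group

lemma στ_gen (v : V) (n : ℕ) (hv : Γ.m v x ≠ 0) (hn : n < Γ.m v x / 2) :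
    σh Γ x hEven hFC (τh Γ x hEven hFC (gD Γ x v n)) = gD Γ x v n := by
  have hk := kpos Γ x hEven hv
  rw [τh_gD Γ x hEven hFC ⟨hv, hn⟩]
  by_cases hc : n = 0
  · subst hc
    rw [tE_zero Γ x, map_mul, map_mul, map_inv, σh_c Γ x hEven hFC hv,
      σh_gD Γ x hEven hFC ⟨hv, by omega⟩,
      sE_neg Γ x (by omega : ¬ Γ.m v x / 2 - 1 + 1 < Γ.m v x / 2)]
    group
  · rw [tE_pos Γ x hc, σh_gD Γ x hEven hFC ⟨hv, by omega⟩,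
      sE_pos Γ x (by omega : n - 1 + 1 < Γ.m v x / 2),
      show n - 1 + 1 = n from by omega]

lemma τσ_comp :
    (τh Γ x hEven hFC).comp (σh Γ x hEven hFC) = MonoidHom.id _ := by
  refine PresentedGroup.ext fun p => ?_
  obtain ⟨⟨v, n⟩, hv, hn⟩ := p
  show τh Γ x hEven hFC (σh Γ x hEven hFC ((lkGraph Γ x).gen ⟨(v, n), ⟨hv, hn⟩⟩)) =
    (lkGraph Γ x).gen ⟨(v, n), ⟨hv, hn⟩⟩
  rw [← gD_valid Γ x v n ⟨hv, hn⟩]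
  exact τσ_gen Γ x hEven hFC v n hv hn

lemma στ_comp :
    (σh Γ x hEven hFC).comp (τh Γ x hEven hFC) = MonoidHom.id _ := by
  refine PresentedGroup.ext fun p => ?_
  obtain ⟨⟨v, n⟩, hv, hn⟩ := p
  show σh Γ x hEven hFC (τh Γ x hEven hFC ((lkGraph Γ x).gen ⟨(v, n), ⟨hv, hn⟩⟩)) =
    (lkGraph Γ x).gen ⟨(v, n), ⟨hv, hn⟩⟩
  rw [← gD_valid Γ x v n ⟨hv, hn⟩]
  exact στ_gen Γ x hEven hFC v n hv hn

/-- The shift automorphism of the link Artin group. -/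
noncomputable def σe : (lkGraph Γ x).ArtinGroup ≃* (lkGraph Γ x).ArtinGroup :=
  MonoidHom.toMulEquiv (σh Γ x hEven hFC) (τh Γ x hEven hFC)
    (τσ_comp Γ x hEven hFC) (στ_comp Γ x hEven hFC)

@[simp] lemma σe_apply (d : (lkGraph Γ x).ArtinGroup) :
    σe Γ x hEven hFC d = σh Γ x hEven hFC d := rfl

@[simp] lemma σe_symm_apply (d : (lkGraph Γ x).ArtinGroup) :
    (σe Γ x hEven hFC).symm d = τh Γ x hEven hFC d := rfl

end ShiftLemmas
end RS

namespace RS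
open ArtinGraph SemidirectProduct

section Phi
variable {V : Type} (Γ : ArtinGraph V) (x : V) (hEven : Γ.IsEven) (hFC : Γ.IsFC)

/-- The action of `ℤ` on the link Artin group by the shift. -/
noncomputable def act : Multiplicative ℤ →* MulAut ((lkGraph Γ x).ArtinGroup) :=
  zpowersHom _ (σe Γ x hEven hFC)

lemma act_ofAdd_one : act Γ x hEven hFC (Multiplicative.ofAdd 1) = σe Γ x hEven hFC := by
  simp [act]

lemma σpow_gD {v : V} (hv : Γ.m v x ≠ 0) :
    ∀ n, n < Γ.m v x / 2 → ((σe Γ x hEven hFC) ^ n) (gD Γ x v 0) = gD Γ x v n := by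
  intro n
  induction n with
  | zero => intro _; rw [pow_zero]; rfl
  | succ n ih =>
      intro h
      rw [pow_succ', MulAut.mul_apply, ih (by omega), σe_apply,
        σh_gD Γ x hEven hFC ⟨hv, by omega⟩, sE_pos Γ x h]

lemma pc_inl {v : V} (hv : Γ.m v x ≠ 0) :
    ∀ n, n ≤ Γ.m v x / 2 →
      pc (inr (Multiplicative.ofAdd 1) :
          (lkGraph Γ x).ArtinGroup ⋊[act Γ x hEven hFC] Multiplicative ℤ)
        (inl (gD Γ x v 0)) n = inl (cD Γ x v n) := by
  intro n
  induction n with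
  | zero => intro _; rw [pc_zero, cD_zero, map_one]
  | succ n ih =>
      intro h
      rw [pc_succ, ih (by omega), ← map_pow, ← map_inv, ← inl_aut, map_pow, act_ofAdd_one,
        σpow_gD Γ x hEven hFC hv n (by omega), ← map_mul, ← cD_succ]

lemma xrel {v : V} (hv : Γ.m v x ≠ 0) :
    ((inl (gD Γ x v 0) :
        (lkGraph Γ x).ArtinGroup ⋊[act Γ x hEven hFC] Multiplicative ℤ) *
      inr (Multiplicative.ofAdd 1)) ^ (Γ.m v x / 2) =
    (inr (Multiplicative.ofAdd 1) * inl (gD Γ x v 0)) ^ (Γ.m v x / 2) := by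
  apply braid_of_comm
  rw [pc_inl Γ x hEven hFC hv _ le_rfl]
  have h1 := (inl_aut (φ := act Γ x hEven hFC) (Multiplicative.ofAdd 1)
    (cD Γ x v (Γ.m v x / 2))).symm
  rw [act_ofAdd_one, σe_apply, σh_c Γ x hEven hFC hv, map_inv] at h1
  -- h1 : inr t * inl c * (inr t)⁻¹ = inl c
  exact mul_inv_eq_iff_eq_mul.mp h1

open scoped Classical in
/-- The map `G_Γ → G_Δ ⋊ ℤ`. -/
noncomputable def Φh (hst : Γ.star x = Set.univ) :
    Γ.ArtinGroup →* (lkGraph Γ x).ArtinGroup ⋊[act Γ x hEven hFC] Multiplicative ℤ :=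
  PresentedGroup.toGroup
    (f := fun v => if v = x then inr (Multiplicative.ofAdd 1) else inl (gD Γ x v 0)) (by
    rintro r ⟨u, v, hM, rfl⟩
    rw [map_mul, map_inv, mul_inv_eq_one, hom_alt, hom_alt]
    simp only [FreeGroup.lift_apply_of]
    have hne : u ≠ v := by rintro rfl; exact hM (Γ.loopless u)
    obtain ⟨k, hk⟩ := hEven u v
    rw [show Γ.m u v = 2 * k from by omega, alt_even, alt_even]
    by_cases hux : u = x
    · obtain rfl := hux.symm
      rw [if_pos rfl, if_neg (Ne.symm hne)]
      have hv : Γ.m v x ≠ 0 := by rw [Γ.symm]; exact hM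
      have hk' : Γ.m v x = k + k := by rw [Γ.symm v x]; omega
      rw [show k = Γ.m v x / 2 from by omega]
      exact (xrel Γ x hEven hFC hv).symm
    · by_cases hvx : v = x
      · obtain rfl := hvx.symm
        rw [if_pos rfl, if_neg hux]
        have hu : Γ.m u x ≠ 0 := hM
        rw [show k = Γ.m u x / 2 from by omega]
        exact xrel Γ x hEven hFC hu
      · rw [if_neg hux, if_neg hvx, ← map_mul, ← map_mul, ← map_pow, ← map_pow]
        refine congrArg inl ?_
        have h := relD Γ x hne hM ⟨k, by omega⟩ 0 0
        rwa [show Γ.m u v / 2 = k from by omega] at h)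

lemma Φh_gen_x (hst : Γ.star x = Set.univ) :
    Φh Γ x hEven hFC hst (Γ.gen x) = inr (Multiplicative.ofAdd 1) := by
  exact (PresentedGroup.toGroup.of _).trans (if_pos rfl)

lemma Φh_gen (hst : Γ.star x = Set.univ) {v : V} (hv : v ≠ x) :
    Φh Γ x hEven hFC hst (Γ.gen v) = inl (gD Γ x v 0) := by
  exact (PresentedGroup.toGroup.of _).trans (if_neg hv)

end Phi
end RS

namespace RS
open ArtinGraph

section FD
variable {V : Type} (Γ : ArtinGraph V) (x : V) (hEven : Γ.IsEven) (hFC : Γ.IsFC)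

include hEven hFC in
/-- The map `G_Δ → G_Γ`, `v_n ↦ xⁿ v x⁻ⁿ`. -/
noncomputable def fDh : (lkGraph Γ x).ArtinGroup →* Γ.ArtinGroup :=
  PresentedGroup.toGroup
    (f := fun p => Γ.gen x ^ p.val.2 * Γ.gen p.val.1 * (Γ.gen x ^ p.val.2)⁻¹) (by
    rintro r ⟨p, q, hM, rfl⟩
    obtain ⟨⟨u, i⟩, hp⟩ := p
    obtain ⟨⟨v, j⟩, hq⟩ := q
    rw [map_mul, map_inv, mul_inv_eq_one, hom_alt, hom_alt]
    simp only [FreeGroup.lift_apply_of]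
    have hne : u ≠ v := fun h => hM (lkm_eq Γ x _ _ h)
    have hm0 : Γ.m u v ≠ 0 := by rwa [lkm_ne Γ x _ _ hne] at hM
    rw [lkm_ne Γ x _ _ hne]
    obtain ⟨k, hk⟩ := hEven u v
    rw [show Γ.m u v = 2 * k from by omega, alt_even, alt_even]
    by_cases h2 : Γ.m u v = 2
    · rw [show k = 1 from by omega, pow_one, pow_one]
      have hUV : Commute (Γ.gen u) (Γ.gen v) := gen_comm Γ h2
      rcases fc_or Γ x hFC hp.1 hq.1 hm0 with hux | hvx
      · have hi0 : i = 0 := by have := hp.2; omega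
        subst hi0
        simp only [pow_zero, inv_one, one_mul, mul_one]
        have hUX : Commute (Γ.gen u) (Γ.gen x) := gen_comm Γ hux
        exact ((hUX.pow_right j).mul_right hUV).mul_right (hUX.pow_right j).inv_right
      · have hj0 : j = 0 := by have := hq.2; omega
        subst hj0
        simp only [pow_zero, inv_one, one_mul, mul_one]
        have hVX : Commute (Γ.gen v) (Γ.gen x) := gen_comm Γ hvx
        exact (((hVX.pow_right i).mul_right hUV.symm).mul_right
          (hVX.pow_right i).inv_right).symm
    · obtain ⟨hux, hvx⟩ := fc_both Γ x hFC hp.1 hq.1 hm0 h2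
      have hi0 : i = 0 := by have := hp.2; omega
      have hj0 : j = 0 := by have := hq.2; omega
      subst hi0; subst hj0
      simp only [pow_zero, inv_one, one_mul, mul_one]
      have h := gen_braid_pow Γ hm0 ⟨k, by omega⟩
      rwa [show Γ.m u v / 2 = k from by omega] at h)

lemma fDh_gen (p : {p : V × ℕ // Γ.m p.1 x ≠ 0 ∧ p.2 < Γ.m p.1 x / 2}) :
    fDh Γ x hEven hFC ((lkGraph Γ x).gen p) =
      Γ.gen x ^ p.val.2 * Γ.gen p.val.1 * (Γ.gen x ^ p.val.2)⁻¹ :=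
  PresentedGroup.toGroup.of _

lemma fDh_gD {v : V} {n : ℕ} (h : Γ.m v x ≠ 0 ∧ n < Γ.m v x / 2) :
    fDh Γ x hEven hFC (gD Γ x v n) =
      Γ.gen x ^ n * Γ.gen v * (Γ.gen x ^ n)⁻¹ := by
  rw [gD_valid Γ x v n h, fDh_gen]

lemma fDh_cD {v : V} (hv : Γ.m v x ≠ 0) :
    ∀ n, n ≤ Γ.m v x / 2 →
      fDh Γ x hEven hFC (cD Γ x v n) = pc (Γ.gen x) (Γ.gen v) n := by
  intro n
  induction n with
  | zero => intro _; rw [cD_zero, map_one, pc_zero]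
  | succ n ih =>
      intro h
      rw [cD_succ, map_mul, ih (by omega), fDh_gD Γ x hEven hFC ⟨hv, by omega⟩, pc_succ]

include hEven in
lemma braidΓ {v : V} (hv : Γ.m v x ≠ 0) :
    (Γ.gen v * Γ.gen x) ^ (Γ.m v x / 2) = (Γ.gen x * Γ.gen v) ^ (Γ.m v x / 2) :=
  gen_braid_pow Γ hv (hEven v x)

lemma key1 (d : (lkGraph Γ x).ArtinGroup) :
    fDh Γ x hEven hFC (σh Γ x hEven hFC d) =
      Γ.gen x * fDh Γ x hEven hFC d * (Γ.gen x)⁻¹ := by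
  have hcomp : (fDh Γ x hEven hFC).comp (σh Γ x hEven hFC) =
      ((MulAut.conj (Γ.gen x)).toMonoidHom).comp (fDh Γ x hEven hFC) := by
    refine PresentedGroup.ext fun p => ?_
    obtain ⟨⟨v, n⟩, hv, hn⟩ := p
    have hv' : Γ.m v x ≠ 0 := hv
    have hn' : n < Γ.m v x / 2 := hn
    show fDh Γ x hEven hFC (σh Γ x hEven hFC ((lkGraph Γ x).gen ⟨(v, n), ⟨hv, hn⟩⟩)) =
      (MulAut.conj (Γ.gen x)) (fDh Γ x hEven hFC ((lkGraph Γ x).gen ⟨(v, n), ⟨hv, hn⟩⟩))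
    rw [← gD_valid Γ x v n ⟨hv, hn⟩, MulAut.conj_apply, σh_gD Γ x hEven hFC ⟨hv, hn⟩,
      fDh_gD Γ x hEven hFC ⟨hv, hn⟩]
    by_cases hc : n + 1 < Γ.m v x / 2
    · rw [sE_pos Γ x hc, fDh_gD Γ x hEven hFC ⟨hv, hc⟩, pow_succ]
      group
    · have hk := kpos Γ x hEven hv
      rw [sE_neg Γ x hc, map_mul, map_mul, map_inv,
        fDh_cD Γ x hEven hFC hv _ le_rfl, fDh_gD Γ x hEven hFC ⟨hv, hk⟩]
      simp only [pow_zero, inv_one, one_mul, mul_one]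
      rw [← conj_pow_eq (Γ.gen x) (Γ.gen v) (Γ.m v x / 2) (braidΓ Γ x hEven hv),
        show Γ.m v x / 2 = n + 1 from by omega, pow_succ]

      group
  exact DFunLike.congr_fun hcomp d

lemma key1' (d : (lkGraph Γ x).ArtinGroup) :
    fDh Γ x hEven hFC ((σe Γ x hEven hFC)⁻¹ d) =
      (Γ.gen x)⁻¹ * fDh Γ x hEven hFC d * Γ.gen x := by
  have hτ : (σe Γ x hEven hFC)⁻¹ d = τh Γ x hEven hFC d := rfl
  have h2 : σh Γ x hEven hFC (τh Γ x hEven hFC d) = d :=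
    DFunLike.congr_fun (στ_comp Γ x hEven hFC) d
  have h := key1 Γ x hEven hFC (τh Γ x hEven hFC d)
  rw [h2] at h
  rw [hτ, h]
  group

lemma key2 (z : ℤ) (d : (lkGraph Γ x).ArtinGroup) :
    fDh Γ x hEven hFC (((σe Γ x hEven hFC) ^ z) d) =
      Γ.gen x ^ z * fDh Γ x hEven hFC d * (Γ.gen x ^ z)⁻¹ := by
  induction z using Int.induction_on generalizing d with
  | zero => simp
  | succ i ih =>
      rw [zpow_add_one, MulAut.mul_apply, ih, σe_apply, key1, zpow_add_one]
      group
  | pred i ih =>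
      rw [zpow_sub_one, MulAut.mul_apply, ih, key1', zpow_sub_one]
      group

end FD
end RS

namespace RS
open ArtinGraph SemidirectProduct

section Psi
variable {V : Type} (Γ : ArtinGraph V) (x : V) (hEven : Γ.IsEven) (hFC : Γ.IsFC)

lemma act_apply (z : Multiplicative ℤ) :
    act Γ x hEven hFC z = (σe Γ x hEven hFC) ^ z.toAdd := rfl

lemma compat : ∀ z : Multiplicative ℤ,
    (fDh Γ x hEven hFC).comp ((act Γ x hEven hFC z).toMonoidHom) =
      (MulAut.conj ((zpowersHom Γ.ArtinGroup (Γ.gen x)) z)).toMonoidHom.comp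
        (fDh Γ x hEven hFC) := by
  intro z
  refine MonoidHom.ext fun d => ?_
  show fDh Γ x hEven hFC ((act Γ x hEven hFC z) d) =
    MulAut.conj ((zpowersHom Γ.ArtinGroup (Γ.gen x)) z) (fDh Γ x hEven hFC d)
  rw [act_apply, MulAut.conj_apply, zpowersHom_apply]
  exact key2 Γ x hEven hFC z.toAdd d

/-- The map `G_Δ ⋊ ℤ → G_Γ`. -/
noncomputable def Ψh :
    ((lkGraph Γ x).ArtinGroup ⋊[act Γ x hEven hFC] Multiplicative ℤ) →* Γ.ArtinGroup :=
  SemidirectProduct.lift (fDh Γ x hEven hFC) (zpowersHom Γ.ArtinGroup (Γ.gen x))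
    (compat Γ x hEven hFC)

lemma Ψh_inl (d : (lkGraph Γ x).ArtinGroup) :
    Ψh Γ x hEven hFC (inl d) = fDh Γ x hEven hFC d :=
  SemidirectProduct.lift_inl _ _ _ d

lemma Ψh_inr (g : Multiplicative ℤ) :
    Ψh Γ x hEven hFC (inr g) = Γ.gen x ^ g.toAdd :=
  SemidirectProduct.lift_inr _ _ _ g

lemma mem_lk (hst : Γ.star x = Set.univ) {v : V} (hv : v ≠ x) : Γ.m v x ≠ 0 := by
  have h : v ∈ Γ.star x := by rw [hst]; exact Set.mem_univ v
  rcases h with h | h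
  · exact absurd h hv
  · rw [Γ.symm]; exact h

lemma ΨΦ (hst : Γ.star x = Set.univ) :
    (Ψh Γ x hEven hFC).comp (Φh Γ x hEven hFC hst) = MonoidHom.id _ := by
  refine PresentedGroup.ext fun v => ?_
  show Ψh Γ x hEven hFC (Φh Γ x hEven hFC hst (Γ.gen v)) = Γ.gen v
  by_cases hv : v = x
  · obtain rfl := hv.symm
    rw [Φh_gen_x Γ x hEven hFC hst, Ψh_inr]
    simp
  · rw [Φh_gen Γ x hEven hFC hst hv, Ψh_inl,
      fDh_gD Γ x hEven hFC ⟨mem_lk Γ x hst hv, kpos Γ x hEven (mem_lk Γ x hst hv)⟩]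
    simp

lemma ΦΨ (hst : Γ.star x = Set.univ) :
    (Φh Γ x hEven hFC hst).comp (Ψh Γ x hEven hFC) = MonoidHom.id _ := by
  refine SemidirectProduct.hom_ext ?_ ?_
  · refine PresentedGroup.ext fun p => ?_
    obtain ⟨⟨v, n⟩, hv, hn⟩ := p
    have hv' : Γ.m v x ≠ 0 := hv
    have hn' : n < Γ.m v x / 2 := hn
    have hvx : v ≠ x := fun h => hv' (by rw [h]; exact Γ.loopless x)
    show Φh Γ x hEven hFC hst (Ψh Γ x hEven hFC
        (inl ((lkGraph Γ x).gen ⟨(v, n), ⟨hv, hn⟩⟩))) =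
      inl ((lkGraph Γ x).gen ⟨(v, n), ⟨hv, hn⟩⟩)
    rw [← gD_valid Γ x v n ⟨hv, hn⟩, Ψh_inl, fDh_gD Γ x hEven hFC ⟨hv, hn⟩,
      map_mul, map_mul, map_inv, map_pow, Φh_gen_x Γ x hEven hFC hst,
      Φh_gen Γ x hEven hFC hst hvx, ← map_pow, ← map_inv, ← inl_aut, map_pow,
      act_ofAdd_one, σpow_gD Γ x hEven hFC hv' n hn']
  · refine MonoidHom.ext_mint ?_
    show Φh Γ x hEven hFC hst (Ψh Γ x hEven hFC (inr (Multiplicative.ofAdd 1))) =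
      inr (Multiplicative.ofAdd 1)
    rw [Ψh_inr]
    simp only [toAdd_ofAdd, zpow_one]
    exact Φh_gen_x Γ x hEven hFC hst

end Psi
end RS

open SemidirectProduct in
open ArtinGraph in
/-- if `Γ` is even FC-type and `st(x) = V`, the kernel of the
retraction `ρ_x : G_Γ → ⟨x⟩ ≅ ℤ` is isomorphic to the Artin group of `lkGraph`,
via `(v, n) ↦ xⁿ v x⁻ⁿ`. -/
theorem stmt11 {V : Type} (Γ : ArtinGraph V) (hEven : Γ.IsEven) (hFC : Γ.IsFC)
    (x : V) (hst : Γ.star x = Set.univ)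
    (ρ : Γ.ArtinGroup →* Multiplicative ℤ)
    (hρx : ρ (Γ.gen x) = Multiplicative.ofAdd 1)
    (hρv : ∀ v, v ≠ x → ρ (Γ.gen v) = 1) :
    ∃ e : (lkGraph Γ x).ArtinGroup ≃* ρ.ker,
      ∀ p, ((e ((lkGraph Γ x).gen p) : ρ.ker) : Γ.ArtinGroup) =
        (Γ.gen x) ^ p.val.2 * Γ.gen p.val.1 * ((Γ.gen x) ^ p.val.2)⁻¹ := by
  have hρ : ρ = (SemidirectProduct.rightHom).comp (RS.Φh Γ x hEven hFC hst) := by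
    refine PresentedGroup.ext fun v => ?_
    by_cases hv : v = x
    · obtain rfl := hv.symm
      show ρ (Γ.gen x) = rightHom (RS.Φh Γ x hEven hFC hst (Γ.gen x))
      rw [hρx, RS.Φh_gen_x Γ x hEven hFC hst, rightHom_inr]
    · show ρ (Γ.gen v) = rightHom (RS.Φh Γ x hEven hFC hst (Γ.gen v))
      rw [hρv v hv, RS.Φh_gen Γ x hEven hFC hst hv, rightHom_inl]
  have hΦΨ : ∀ s, RS.Φh Γ x hEven hFC hst (RS.Ψh Γ x hEven hFC s) = s := fun s =>
    DFunLike.congr_fun (RS.ΦΨ Γ x hEven hFC hst) s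
  have hΨΦ : ∀ g, RS.Ψh Γ x hEven hFC (RS.Φh Γ x hEven hFC hst g) = g := fun g =>
    DFunLike.congr_fun (RS.ΨΦ Γ x hEven hFC hst) g
  have e1 : ∀ d, RS.Φh Γ x hEven hFC hst (RS.fDh Γ x hEven hFC d) = inl d := by
    intro d
    rw [show RS.fDh Γ x hEven hFC d = RS.Ψh Γ x hEven hFC (inl d) from
      (RS.Ψh_inl Γ x hEven hFC d).symm]
    exact hΦΨ (inl d)
  have hmem : ∀ d, RS.fDh Γ x hEven hFC d ∈ ρ.ker := by
    intro d
    rw [MonoidHom.mem_ker, hρ, MonoidHom.comp_apply, e1 d, rightHom_inl]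
  let θ : (lkGraph Γ x).ArtinGroup →* ρ.ker :=
    (RS.fDh Γ x hEven hFC).codRestrict ρ.ker hmem
  have hθ : ∀ d, (θ d : Γ.ArtinGroup) = RS.fDh Γ x hEven hFC d := fun d => rfl
  have hinj : Function.Injective θ := by
    intro d d' h
    have h0 : RS.fDh Γ x hEven hFC d = RS.fDh Γ x hEven hFC d' := by
      rw [← hθ d, ← hθ d', h]
    exact inl_injective (by rw [← e1 d, ← e1 d', h0])
  have hsurj : Function.Surjective θ := by
    rintro ⟨g, hg⟩
    have hg1 : ρ g = 1 := hg
    have hg2 : (RS.Φh Γ x hEven hFC hst g).right = 1 := by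
      have : ((SemidirectProduct.rightHom).comp (RS.Φh Γ x hEven hFC hst)) g = 1 := by
        rw [← hρ]; exact hg1
      exact this
    have h3 : RS.Φh Γ x hEven hFC hst g = inl ((RS.Φh Γ x hEven hFC hst g).left) := by
      conv_lhs => rw [← inl_left_mul_inr_right (RS.Φh Γ x hEven hFC hst g)]
      rw [hg2, map_one, mul_one]
    refine ⟨(RS.Φh Γ x hEven hFC hst g).left, ?_⟩
    apply Subtype.ext
    rw [hθ]
    rw [show RS.fDh Γ x hEven hFC ((RS.Φh Γ x hEven hFC hst g).left) =
      RS.Ψh Γ x hEven hFC (inl ((RS.Φh Γ x hEven hFC hst g).left)) from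
      (RS.Ψh_inl Γ x hEven hFC _).symm, ← h3, hΨΦ g]
  refine ⟨MulEquiv.ofBijective θ ⟨hinj, hsurj⟩, fun p => ?_⟩
  show (θ ((lkGraph Γ x).gen p) : Γ.ArtinGroup) = _
  rw [hθ, RS.fDh_gen]
end
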